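/- arXiv:2005.01378 — 6 statements merged into one kernel-verified Lean document; each statement's English description precedes it below -/
import Mathlib

section
/- There is a universal constant ε₀ > 0 such that the following holds. Let 0 < ε ≤ ε₀ with εN an integer, and let constants satisfy c₁ ≥ 1, c₂ ≥ 1, c₃ ≥ 5c₁, and c₄ ≥ max(100, 6c₃, 50c₁). Assume the concentration condition with constant c₁. Let w ∈ Δ_{N,2ε}, let u be a unit vector with uᵀΣ_w u = ‖Σ_w‖₂, set r = ‖μ_w − μ*‖₂, and assume r ≥ c₂ ε √(ln(1/ε)) and λ_max(Σ_w) ≥ 1 + c₄ r²/ε. Then there exists i ∈ B with w_i > 0 such that (∇_w F(w,u))_i − (uᵀμ*)·(uᵀ(μ* − 2μ_w)) > 2c₃ r²/ε². -/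
open Matrix Finset RealInnerProductSpace

/-- Euclidean (ℓ²) norm of a vector in `Fin n → ℝ`. -/
noncomputable def vnorm {n : ℕ} (v : Fin n → ℝ) : ℝ := Real.sqrt (∑ i, v i ^ 2)

/-- Spectral norm (ℓ²-operator norm) of a matrix. -/
noncomputable def specNorm {m n : ℕ} (A : Matrix (Fin m) (Fin n) ℝ) : ℝ :=
  ‖LinearMap.toContinuousLinearMap (Matrix.toEuclideanLin A)‖

/-- Largest eigenvalue of a symmetric matrix, as the supremum of the Rayleigh quotient
over the unit sphere. -/
noncomputable def lambdaMax {n : ℕ} (A : Matrix (Fin n) (Fin n) ℝ) : ℝ :=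
  sSup {r | ∃ v : Fin n → ℝ, vnorm v = 1 ∧ r = v ⬝ᵥ A.mulVec v}

/-- Weighted empirical mean `μ_w = X w`. -/
noncomputable def muW {d N : ℕ} (X : Matrix (Fin d) (Fin N) ℝ) (w : Fin N → ℝ) : Fin d → ℝ :=
  X.mulVec w

/-- Weighted empirical covariance `Σ_w = ∑ i, w_i (X_i - μ_w)(X_i - μ_w)ᵀ`. -/
noncomputable def covW {d N : ℕ} (X : Matrix (Fin d) (Fin N) ℝ) (w : Fin N → ℝ) :
    Matrix (Fin d) (Fin d) ℝ :=
  ∑ i : Fin N, w i • Matrix.vecMulVec (Xᵀ i - X.mulVec w) (Xᵀ i - X.mulVec w)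

/-- The constraint set `Δ_{N,ε}`. -/
def deltaSet (N : ℕ) (ε : ℝ) : Set (Fin N → ℝ) :=
  {w | (∑ i, w i) = 1 ∧ ∀ i, 0 ≤ w i ∧ w i ≤ 1 / ((1 - ε) * N)}

/-- Gradient in `w` of `F(w,u) = uᵀ Σ_w u`: the `i`-th coordinate is
`(X_iᵀu)² − 2(uᵀXw)(X_iᵀu)`. -/
noncomputable def gradFw {d N : ℕ} (X : Matrix (Fin d) (Fin N) ℝ) (w : Fin N → ℝ)
    (u : Fin d → ℝ) : Fin N → ℝ :=
  fun i => (Xᵀ i ⬝ᵥ u) ^ 2 - 2 * (u ⬝ᵥ X.mulVec w) * (Xᵀ i ⬝ᵥ u)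

/-- The matrix `Y = exp(ρ Σ_w) / tr(exp(ρ Σ_w))`. -/
noncomputable def ymat {d N : ℕ} (X : Matrix (Fin d) (Fin N) ℝ) (ρ : ℝ) (w : Fin N → ℝ) :
    Matrix (Fin d) (Fin d) ℝ :=
  ((NormedSpace.exp (ρ • covW X w)).trace)⁻¹ • NormedSpace.exp (ρ • covW X w)

/-- The softmax objective `f(w) = (1/ρ) ln tr exp(ρ Σ_w)`. -/
noncomputable def smaxObj {d N : ℕ} (X : Matrix (Fin d) (Fin N) ℝ) (ρ : ℝ) (w : Fin N → ℝ) : ℝ :=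
  (1 / ρ) * Real.log (NormedSpace.exp (ρ • covW X w)).trace

/-- Gradient of the softmax objective: `∇f(w)_i = X_iᵀ Y X_i − 2 X_iᵀ Y μ_w`. -/
noncomputable def gradSmax {d N : ℕ} (X : Matrix (Fin d) (Fin N) ℝ) (ρ : ℝ) (w : Fin N → ℝ) :
    Fin N → ℝ :=
  fun i => Xᵀ i ⬝ᵥ (ymat X ρ w).mulVec (Xᵀ i) - 2 * (Xᵀ i ⬝ᵥ (ymat X ρ w).mulVec (muW X w))

/-- Matrix logarithm of a symmetric matrix, via the spectral theorem (junk value `0` on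
non-Hermitian input). -/
noncomputable def matLog {n : ℕ} (Y : Matrix (Fin n) (Fin n) ℝ) : Matrix (Fin n) (Fin n) ℝ :=
  if h : Y.IsHermitian then h.cfc Real.log else 0

-- helper lemmas
lemma norm_toE {n : ℕ} (v : Fin n → ℝ) : ‖(WithLp.equiv 2 (Fin n → ℝ)).symm v‖ = vnorm v := by
  rw [EuclideanSpace.norm_eq]
  simp [vnorm, sq_abs, Real.norm_eq_abs]

lemma inner_toE {n : ℕ} (u v : Fin n → ℝ) :
    ⟪(WithLp.equiv 2 (Fin n → ℝ)).symm u, (WithLp.equiv 2 (Fin n → ℝ)).symm v⟫ = u ⬝ᵥ v := by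
  simp [PiLp.inner_apply, dotProduct, RCLike.inner_apply]
  exact Finset.sum_congr rfl fun i _ => mul_comm _ _

lemma abs_dot_le {n : ℕ} (u v : Fin n → ℝ) : |u ⬝ᵥ v| ≤ vnorm u * vnorm v := by
  rw [← inner_toE, ← norm_toE u, ← norm_toE v]
  exact abs_real_inner_le_norm _ _

lemma abs_dot_mulVec_le {m n : ℕ} (A : Matrix (Fin m) (Fin n) ℝ) (u : Fin m → ℝ) (v : Fin n → ℝ) :
    |u ⬝ᵥ A.mulVec v| ≤ specNorm A * (vnorm u * vnorm v) := by
  have h : u ⬝ᵥ A.mulVec v =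
      ⟪(WithLp.equiv 2 (Fin m → ℝ)).symm u,
        LinearMap.toContinuousLinearMap (Matrix.toEuclideanLin A)
          ((WithLp.equiv 2 (Fin n → ℝ)).symm v)⟫ := by
    rw [LinearMap.coe_toContinuousLinearMap']
    exact (inner_toE _ _).symm
  rw [h]
  calc _ ≤ ‖(WithLp.equiv 2 (Fin m → ℝ)).symm u‖ *
        ‖LinearMap.toContinuousLinearMap (Matrix.toEuclideanLin A)
          ((WithLp.equiv 2 (Fin n → ℝ)).symm v)‖ := abs_real_inner_le_norm _ _
    _ ≤ ‖(WithLp.equiv 2 (Fin m → ℝ)).symm u‖ *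
        (specNorm A * ‖(WithLp.equiv 2 (Fin n → ℝ)).symm v‖) := by
          exact mul_le_mul_of_nonneg_left (ContinuousLinearMap.le_opNorm _ _) (norm_nonneg _)
    _ = specNorm A * (vnorm u * vnorm v) := by rw [norm_toE, norm_toE]; ring

lemma quadform_sum {d : ℕ} {ι : Type*} (S : Finset ι) (c : ι → ℝ) (z : ι → Fin d → ℝ)
    (u : Fin d → ℝ) :
    u ⬝ᵥ (∑ i ∈ S, c i • Matrix.vecMulVec (z i) (z i)).mulVec u
      = ∑ i ∈ S, c i * (u ⬝ᵥ z i) ^ 2 := by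
  have hsum : (∑ i ∈ S, c i • Matrix.vecMulVec (z i) (z i)) *ᵥ u
      = ∑ i ∈ S, (c i • Matrix.vecMulVec (z i) (z i)) *ᵥ u := by
    simp only [← Matrix.toLin'_apply, map_sum, LinearMap.coe_sum, Finset.sum_apply]
  rw [hsum]
  have hdot : u ⬝ᵥ (∑ i ∈ S, (c i • Matrix.vecMulVec (z i) (z i)) *ᵥ u)
      = ∑ i ∈ S, u ⬝ᵥ ((c i • Matrix.vecMulVec (z i) (z i)) *ᵥ u) := by
    simp only [dotProduct, Finset.sum_apply, Finset.mul_sum]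
    rw [Finset.sum_comm]
  rw [hdot]
  refine Finset.sum_congr rfl fun i _ => ?_
  rw [Matrix.smul_mulVec, dotProduct_smul, smul_eq_mul]
  congr 1
  have : (Matrix.vecMulVec (z i) (z i)).mulVec u = (z i ⬝ᵥ u) • z i := by
    ext j; simp [Matrix.vecMulVec_apply, Matrix.mulVec, dotProduct, Finset.sum_mul, mul_comm,
      mul_assoc]
    rw [Finset.mul_sum]
    exact Finset.sum_congr rfl fun k _ => by ring
  rw [this, dotProduct_smul, smul_eq_mul, dotProduct_comm u (z i), sq]


set_option maxHeartbeats 2000000 in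
/-- at a bad (far-from-true-mean) weight vector there is a bad sample with
large gradient coordinate. -/
theorem stmt_1 : ∃ ε₀ : ℝ, 0 < ε₀ ∧
    ∀ (d N : ℕ) (X : Matrix (Fin d) (Fin N) ℝ) (μs : Fin d → ℝ)
      (G B : Finset (Fin N)) (ε c₁ c₂ c₃ c₄ : ℝ),
    Disjoint G B → G ∪ B = Finset.univ →
    (G.card : ℝ) = (1 - ε) * N → (B.card : ℝ) = ε * N →
    0 < ε → ε ≤ ε₀ →
    1 ≤ c₁ → 1 ≤ c₂ → 5 * c₁ ≤ c₃ → max 100 (max (6 * c₃) (50 * c₁)) ≤ c₄ →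
    (∀ v ∈ deltaSet N (2 * ε),
      specNorm ((∑ i ∈ G, v i • Matrix.vecMulVec (Xᵀ i - μs) (Xᵀ i - μs)) - 1) ≤
        c₁ * ε * Real.log (1 / ε)) →
    ∀ w ∈ deltaSet N (2 * ε), ∀ u : Fin d → ℝ, vnorm u = 1 →
    u ⬝ᵥ (covW X w).mulVec u = specNorm (covW X w) →
    c₂ * ε * Real.sqrt (Real.log (1 / ε)) ≤ vnorm (muW X w - μs) →
    1 + c₄ * vnorm (muW X w - μs) ^ 2 / ε ≤ lambdaMax (covW X w) →
    ∃ i ∈ B, 0 < w i ∧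
      2 * c₃ * vnorm (muW X w - μs) ^ 2 / ε ^ 2 <
        gradFw X w u i - (u ⬝ᵥ μs) * (u ⬝ᵥ (μs - (2 : ℝ) • muW X w)) := by
  refine ⟨1/100, by norm_num, ?_⟩
  intro d N X μs G B ε c₁ c₂ c₃ c₄ hGB hGBu hGcard hBcard hε hε1 hc₁ hc₂ hc₃ hc₄ hconc
    w hw u hu hspec hrlow hlam
  obtain ⟨hwsum, hwbd⟩ := hw
  have hc₄1 : (100:ℝ) ≤ c₄ := le_trans (le_max_left _ _) hc₄
  have hc₄3 : 6 * c₃ ≤ c₄ := le_trans (le_trans (le_max_left _ _) (le_max_right _ _)) hc₄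
  have hc₄5 : 50 * c₁ ≤ c₄ := le_trans (le_trans (le_max_right _ _) (le_max_right _ _)) hc₄
  have hc₄pos : (0:ℝ) < c₄ := by linarith
  set L := Real.log (1 / ε) with hLdef
  have hL : 0 < L := Real.log_pos (by rw [lt_div_iff₀ hε]; linarith)
  clear_value L
  set r := vnorm (muW X w - μs) with hrdef
  clear_value r
  have hrpos : 0 < r :=
    lt_of_lt_of_le (by positivity) hrlow
  have hr2L : ε ^ 2 * L ≤ r ^ 2 := by
    have h1 : (c₂ * ε * Real.sqrt L) ^ 2 ≤ r ^ 2 :=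
      pow_le_pow_left₀ (by positivity) hrlow 2
    have hsq : Real.sqrt L ^ 2 = L := Real.sq_sqrt hL.le
    rw [mul_pow, mul_pow, hsq] at h1
    have hc₂2 : 1 ≤ c₂ ^ 2 := by nlinarith only [hc₂]
    have hkey : ε ^ 2 * L ≤ c₂ ^ 2 * ε ^ 2 * L := by
      nlinarith only [mul_nonneg (sq_nonneg ε) hL.le, hc₂2]
    linarith only [h1, hkey]
  have hN : 0 < (N:ℝ) := by
    rcases Nat.eq_zero_or_pos N with h0 | h0
    · subst h0; simp at hwsum
    · exact_mod_cast h0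
  set b := u ⬝ᵥ μs with hbdef
  clear_value b
  set m := u ⬝ᵥ X.mulVec w with hmdef
  clear_value m
  have huu : u ⬝ᵥ u = 1 := by
    have h : vnorm u ^ 2 = 1 := by rw [hu]; norm_num
    rw [vnorm, Real.sq_sqrt (by positivity)] at h
    rw [dotProduct]
    simpa [pow_two] using h
  have hm : m = ∑ i, w i * (Xᵀ i ⬝ᵥ u) := by
    simp only [hmdef, dotProduct, Matrix.mulVec, Matrix.transpose_apply, Finset.mul_sum]
    rw [Finset.sum_comm]
    exact Finset.sum_congr rfl fun i _ => Finset.sum_congr rfl fun j _ => by ring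
  -- quadratic form of covW
  have hcovq : u ⬝ᵥ (covW X w).mulVec u = ∑ i, w i * ((Xᵀ i ⬝ᵥ u) - m) ^ 2 := by
    rw [covW, quadform_sum]
    refine Finset.sum_congr rfl fun i _ => ?_
    rw [dotProduct_sub, dotProduct_comm u (Xᵀ i), ← hmdef]
  -- quadratic form of the good-part matrix
  have hMq : u ⬝ᵥ ((∑ i ∈ G, w i • Matrix.vecMulVec (Xᵀ i - μs) (Xᵀ i - μs))).mulVec u
      = ∑ i ∈ G, w i * ((Xᵀ i ⬝ᵥ u) - b) ^ 2 := by
    rw [quadform_sum]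
    refine Finset.sum_congr rfl fun i _ => ?_
    rw [dotProduct_sub, dotProduct_comm u (Xᵀ i), ← hbdef]
  -- concentration gives a bound on the good part
  have hGle : ∑ i ∈ G, w i * ((Xᵀ i ⬝ᵥ u) - b) ^ 2 ≤ 1 + c₁ * ε * L := by
    have h1 := hconc w ⟨hwsum, hwbd⟩
    have h2 := abs_dot_mulVec_le
      ((∑ i ∈ G, w i • Matrix.vecMulVec (Xᵀ i - μs) (Xᵀ i - μs)) - 1) u u
    rw [Matrix.sub_mulVec, dotProduct_sub, Matrix.one_mulVec, huu, hMq, hu, mul_one, mul_one]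
      at h2
    have h3 := (abs_le.mp h2).2
    linarith only [h1, h3]
  clear hconc
  -- total-sum identity
  have hm' : ∑ i, w i * (Xᵀ i ⬝ᵥ u) = m := hm.symm
  have hzero : ∑ i, (w i * (Xᵀ i ⬝ᵥ u) - w i * m) = 0 := by
    rw [Finset.sum_sub_distrib, hm', ← Finset.sum_mul, hwsum]; ring
  have htot : ∑ i, w i * ((Xᵀ i ⬝ᵥ u) - b) ^ 2
      = ∑ i, w i * ((Xᵀ i ⬝ᵥ u) - m) ^ 2 + (m - b) ^ 2 := by
    calc ∑ i, w i * ((Xᵀ i ⬝ᵥ u) - b) ^ 2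
        = ∑ i, (w i * ((Xᵀ i ⬝ᵥ u) - m) ^ 2
            + ((2*(m-b)) * (w i * (Xᵀ i ⬝ᵥ u) - w i * m) + (m-b)^2 * w i)) :=
          Finset.sum_congr rfl fun i _ => by ring
      _ = ∑ i, w i * ((Xᵀ i ⬝ᵥ u) - m) ^ 2
            + ((2*(m-b)) * ∑ i, (w i * (Xᵀ i ⬝ᵥ u) - w i * m) + (m-b)^2 * ∑ i, w i) := by
          rw [Finset.sum_add_distrib, Finset.sum_add_distrib, Finset.mul_sum, Finset.mul_sum]
      _ = ∑ i, w i * ((Xᵀ i ⬝ᵥ u) - m) ^ 2 + (m - b) ^ 2 := by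
          rw [hzero, hwsum]; ring
  -- lambdaMax ≤ the quadratic form at u
  have hlamle : lambdaMax (covW X w) ≤ u ⬝ᵥ (covW X w).mulVec u := by
    rw [hspec, lambdaMax]
    refine Real.sSup_le ?_ (by rw [specNorm]; exact norm_nonneg _)
    rintro x ⟨v, hv, rfl⟩
    calc v ⬝ᵥ (covW X w).mulVec v ≤ |v ⬝ᵥ (covW X w).mulVec v| := le_abs_self _
      _ ≤ specNorm (covW X w) * (vnorm v * vnorm v) := abs_dot_mulVec_le _ _ _
      _ = specNorm (covW X w) := by rw [hv]; ring
  have hlam' : 1 + c₄ * (r ^ 2 / ε) ≤ u ⬝ᵥ (covW X w).mulVec u := by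
    rw [← mul_div_assoc]; linarith only [hlam, hlamle]
  clear hlam hlamle hspec
  -- the bad part is large
  have hsplit : ∑ i, w i * ((Xᵀ i ⬝ᵥ u) - b) ^ 2
      = ∑ i ∈ G, w i * ((Xᵀ i ⬝ᵥ u) - b) ^ 2 + ∑ i ∈ B, w i * ((Xᵀ i ⬝ᵥ u) - b) ^ 2 := by
    rw [show (Finset.univ : Finset (Fin N)) = G ∪ B from hGBu.symm, Finset.sum_union hGB]
  have hεL : ε * L ≤ r ^ 2 / ε := by
    rw [le_div_iff₀ hε]
    calc ε * L * ε = ε ^ 2 * L := by ring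
      _ ≤ r ^ 2 := hr2L
  have hQpos : 0 < r ^ 2 / ε := by positivity
  have hSB : (49/50) * c₄ * (r ^ 2 / ε) ≤ ∑ i ∈ B, w i * ((Xᵀ i ⬝ᵥ u) - b) ^ 2 := by
    have h1 : c₁ * (ε * L) ≤ c₁ * (r ^ 2 / ε) :=
      mul_le_mul_of_nonneg_left hεL (by linarith)
    have h2 : 1 + c₄ * (r ^ 2 / ε) + (m - b) ^ 2 ≤ ∑ i, w i * ((Xᵀ i ⬝ᵥ u) - b) ^ 2 := by
      rw [htot, ← hcovq]; linarith [sq_nonneg (m - b)]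
    have h3 : 0 ≤ (c₄ - 50 * c₁) * (r ^ 2 / ε) :=
      mul_nonneg (by linarith) hQpos.le
    linarith only [h1, h2, h3, hGle, hsplit, hc₄5, sq_nonneg (m - b)]
  -- bound on total bad weight
  have h12 : 0 < (1 - 2*ε) * N := mul_pos (by linarith only [hε1]) hN
  have hWB : ∑ i ∈ B, w i ≤ (50/49) * ε := by
    have h1 : ∑ i ∈ B, w i ≤ ∑ i ∈ B, 1 / ((1 - 2*ε) * N) :=
      Finset.sum_le_sum fun i _ => (hwbd i).2
    rw [Finset.sum_const, nsmul_eq_mul] at h1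
    have h2 : (B.card : ℝ) * (1 / ((1 - 2*ε) * N)) ≤ (50/49) * ε := by
      rw [hBcard, mul_one_div, div_le_iff₀ h12]
      have hq : 1 ≤ (50/49) * (1 - 2*ε) := by linarith only [hε1]
      have hq2 := mul_le_mul_of_nonneg_right hq (mul_pos hε hN).le
      calc ε * (N:ℝ) = 1 * (ε * N) := by ring
        _ ≤ (50/49) * (1 - 2*ε) * (ε * N) := hq2
        _ = 50/49 * ε * ((1 - 2*ε) * N) := by ring
    linarith only [h1, h2]
  -- existence of a bad index with large deviation
  have hex : ∃ i ∈ B, 0 < w i ∧ (9/10) * c₄ * (r ^ 2 / ε ^ 2) < ((Xᵀ i ⬝ᵥ u) - b) ^ 2 := by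
    by_contra hcon
    push_neg at hcon
    have hC : 0 ≤ (9/10) * c₄ * (r ^ 2 / ε ^ 2) := by positivity
    have hterm : ∀ i ∈ B, w i * ((Xᵀ i ⬝ᵥ u) - b) ^ 2
        ≤ w i * ((9/10) * c₄ * (r ^ 2 / ε ^ 2)) := by
      intro i hi
      rcases eq_or_lt_of_le (hwbd i).1 with h0 | h0
      · rw [← h0]; simp
      · exact mul_le_mul_of_nonneg_left (hcon i hi h0) (hwbd i).1
    have hsum2 : ∑ i ∈ B, w i * ((Xᵀ i ⬝ᵥ u) - b) ^ 2
        ≤ (∑ i ∈ B, w i) * ((9/10) * c₄ * (r ^ 2 / ε ^ 2)) := by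
      rw [Finset.sum_mul]; exact Finset.sum_le_sum hterm
    have heP : ε * (r ^ 2 / ε ^ 2) = r ^ 2 / ε := by
      field_simp
    have hchain : ∑ i ∈ B, w i * ((Xᵀ i ⬝ᵥ u) - b) ^ 2 ≤ (45/49) * c₄ * (r ^ 2 / ε) := by
      calc ∑ i ∈ B, w i * ((Xᵀ i ⬝ᵥ u) - b) ^ 2
          ≤ (∑ i ∈ B, w i) * ((9/10) * c₄ * (r ^ 2 / ε ^ 2)) := hsum2
        _ ≤ ((50/49) * ε) * ((9/10) * c₄ * (r ^ 2 / ε ^ 2)) :=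
            mul_le_mul_of_nonneg_right hWB hC
        _ = (45/49) * c₄ * (ε * (r ^ 2 / ε ^ 2)) := by ring
        _ = (45/49) * c₄ * (r ^ 2 / ε) := by rw [heP]
    linarith only [hchain, hSB, mul_pos hc₄pos hQpos]
  obtain ⟨i, hiB, hwi, hsi⟩ := hex
  refine ⟨i, hiB, hwi, ?_⟩
  -- final computation
  have hdot2 : u ⬝ᵥ (μs - (2:ℝ) • muW X w) = b - 2 * m := by
    simp only [muW, dotProduct_sub, dotProduct_smul, smul_eq_mul, ← hbdef, ← hmdef]
  have hexpr : gradFw X w u i - b * (u ⬝ᵥ (μs - (2:ℝ) • muW X w))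
      = ((Xᵀ i ⬝ᵥ u) - b) ^ 2 - 2 * (m - b) * ((Xᵀ i ⬝ᵥ u) - b) := by
    rw [hdot2]; simp only [gradFw, ← hmdef]; ring
  have htb : |m - b| ≤ r := by
    have h : m - b = u ⬝ᵥ (muW X w - μs) := by
      simp only [muW, dotProduct_sub, ← hbdef, ← hmdef]
    rw [h]
    calc _ ≤ vnorm u * vnorm (muW X w - μs) := abs_dot_le _ _
      _ = r := by rw [hu, ← hrdef]; ring
  set s := (Xᵀ i ⬝ᵥ u) - b with hsdef
  clear_value s
  have habs : (m - b) * s ≤ r * |s| := by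
    calc (m - b) * s ≤ |(m - b) * s| := le_abs_self _
      _ = |m - b| * |s| := abs_mul _ _
      _ ≤ r * |s| := mul_le_mul_of_nonneg_right htb (abs_nonneg _)
  have hamgm : 2 * (r * |s|) ≤ s ^ 2 / 2 + 2 * r ^ 2 := by
    nlinarith only [sq_nonneg (|s| - 2*r), sq_abs s]

  have hPpos : 0 < r ^ 2 / ε ^ 2 := by positivity
  have hgoal_eq : 2 * c₃ * r ^ 2 / ε ^ 2 = 2 * c₃ * (r ^ 2 / ε ^ 2) := by ring
  rw [hexpr, hgoal_eq]
  have hfin1 : 100 * (r ^ 2 / ε ^ 2) ≤ c₄ * (r ^ 2 / ε ^ 2) :=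
    mul_le_mul_of_nonneg_right hc₄1 hPpos.le
  have hfin2 : 6 * c₃ * (r ^ 2 / ε ^ 2) ≤ c₄ * (r ^ 2 / ε ^ 2) :=
    mul_le_mul_of_nonneg_right hc₄3 hPpos.le
  have hε2 : ε ^ 2 ≤ 1 := by nlinarith only [hε, hε1]
  have hr2le : r ^ 2 ≤ r ^ 2 / ε ^ 2 := by
    rw [le_div_iff₀ (by positivity : (0:ℝ) < ε ^ 2)]
    nlinarith only [sq_nonneg r, hε2]
  linarith only [hsi, habs, hamgm, hfin1, hfin2, hr2le, hPpos]
end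

section
/- Let 0 < ε < 1/4 with εN an integer, and let constants satisfy c₁ ≥ 1, c₂ ≥ 1, and c₃ ≥ 5c₁. Assume the concentration condition with constant c₁. Let w ∈ Δ_{N,2ε}, let u ∈ ℝ^d be a unit vector, set r = ‖μ_w − μ*‖₂, and assume r ≥ c₂ ε √(ln(1/ε)). Then there exists j ∈ G with w_j < 1/((1−2ε)N) such that (∇_w F(w,u))_j − (uᵀμ*)·(uᵀ(μ* − 2μ_w)) ≤ c₃ r²/ε². -/
open Matrix Finset RealInnerProductSpace

set_option maxHeartbeats 1600000

section Aux

open Matrix Finset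

private lemma dotProduct_sum' {d N : ℕ} (G : Finset (Fin N)) (u : Fin d → ℝ)
    (h : Fin N → Fin d → ℝ) :
    u ⬝ᵥ (∑ i ∈ G, h i) = ∑ i ∈ G, u ⬝ᵥ h i := by
  simp only [dotProduct, Finset.sum_apply, Finset.mul_sum]
  exact Finset.sum_comm

private lemma sum_mulVec' {d N n : ℕ} (G : Finset (Fin N)) (M : Fin N → Matrix (Fin d) (Fin n) ℝ)
    (u : Fin n → ℝ) : (∑ i ∈ G, M i).mulVec u = ∑ i ∈ G, (M i).mulVec u := by
  ext j
  simp only [mulVec, dotProduct, Matrix.sum_apply, Finset.sum_apply, Finset.sum_mul]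
  exact Finset.sum_comm

private lemma vecMulVec_mulVec' {d n : ℕ} (a : Fin d → ℝ) (b u : Fin n → ℝ) :
    (Matrix.vecMulVec a b).mulVec u = (b ⬝ᵥ u) • a := by
  funext i
  simp only [vecMulVec_apply, mulVec, dotProduct, Pi.smul_apply, smul_eq_mul, Finset.sum_mul,
    Finset.mul_sum]
  exact Finset.sum_congr rfl fun j _ => by ring

private lemma quadform_gen {d N : ℕ} (f : Fin N → Fin d → ℝ) (G : Finset (Fin N)) (v : Fin N → ℝ)
    (u : Fin d → ℝ) :
    u ⬝ᵥ (∑ i ∈ G, v i • Matrix.vecMulVec (f i) (f i)).mulVec u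
      = ∑ i ∈ G, v i * (f i ⬝ᵥ u) ^ 2 := by
  rw [sum_mulVec', dotProduct_sum']
  refine Finset.sum_congr rfl fun i _ => ?_
  rw [Matrix.smul_mulVec, vecMulVec_mulVec']
  rw [dotProduct_smul, dotProduct_smul]
  simp only [smul_eq_mul, dotProduct_comm u (f i)]
  ring

private lemma quadform_eqX {d N : ℕ} (X : Matrix (Fin d) (Fin N) ℝ) (μs : Fin d → ℝ)
    (G : Finset (Fin N)) (v : Fin N → ℝ) (u : Fin d → ℝ) :
    u ⬝ᵥ (∑ i ∈ G, v i • Matrix.vecMulVec (Xᵀ i - μs) (Xᵀ i - μs)).mulVec u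
      = ∑ i ∈ G, v i * ((Xᵀ i - μs) ⬝ᵥ u) ^ 2 :=
  quadform_gen (fun i => Xᵀ i - μs) G v u

private lemma rayleigh' {n : ℕ} (A : Matrix (Fin n) (Fin n) ℝ) (u : Fin n → ℝ)
    (hu : ∑ i, u i ^ 2 = 1) : |u ⬝ᵥ A.mulVec u| ≤ specNorm A := by
  set u' : EuclideanSpace ℝ (Fin n) := (WithLp.equiv 2 (Fin n → ℝ)).symm u with hu'
  have hnorm : ‖u'‖ = 1 := by
    rw [EuclideanSpace.norm_eq]
    simp only [hu', WithLp.equiv_symm_apply, PiLp.toLp_apply, WithLp.ofLp_toLp]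
    rw [show ∑ i, ‖u i‖ ^ 2 = ∑ i, u i ^ 2 by simp [Real.norm_eq_abs, sq_abs]]
    rw [hu, Real.sqrt_one]
  have hinner : u ⬝ᵥ A.mulVec u = inner ℝ u' (Matrix.toEuclideanLin A u') := by
    rw [Matrix.toEuclideanLin_apply]
    simp only [hu']
    rw [PiLp.inner_apply]
    simp [dotProduct, WithLp.equiv_symm_apply, PiLp.toLp_apply, RCLike.inner_apply, mul_comm]
  rw [hinner]
  calc |inner ℝ u' (Matrix.toEuclideanLin A u')|
      ≤ ‖u'‖ * ‖Matrix.toEuclideanLin A u'‖ := abs_real_inner_le_norm _ _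
    _ ≤ ‖u'‖ * (specNorm A * ‖u'‖) := by
        refine mul_le_mul_of_nonneg_left ?_ (norm_nonneg _)
        exact (LinearMap.toContinuousLinearMap (Matrix.toEuclideanLin A)).le_opNorm u'
    _ = specNorm A := by rw [hnorm]; ring

private lemma vnorm_one_sq {n : ℕ} (u : Fin n → ℝ) (hu : vnorm u = 1) : ∑ i, u i ^ 2 = 1 := by
  have h0 : (0:ℝ) ≤ ∑ i, u i ^ 2 := Finset.sum_nonneg fun i _ => sq_nonneg _
  rw [← Real.sq_sqrt h0]
  rw [show Real.sqrt (∑ i, u i ^ 2) = vnorm u from rfl, hu]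
  norm_num


private lemma arith_hrsq {ε c₂ L R : ℝ} (hε0 : 0 < ε) (hL0 : 0 ≤ L) (hc₂ : 1 ≤ c₂)
    (h1 : c₂^2 * ε^2 * L ≤ R) : ε^2*L ≤ R := by
  nlinarith [mul_nonneg (mul_nonneg (sq_nonneg ε) hL0)
      (mul_nonneg (show (0:ℝ) ≤ c₂ - 1 by linarith) (show (0:ℝ) ≤ c₂ + 1 by linarith))]

private lemma arith_3k {ε NN : ℝ} (hNN : 0 < NN) (hε0 : 0 < ε) (hε1 : ε < 1/4) :
    3*(ε*NN) < NN := by nlinarith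

private lemma arith_hE {x y θ δ kc : ℝ} (hA : x + θ*y ≤ 1 + δ) (hB : 1 - δ ≤ y)
    (hθ0 : 0 ≤ θ) (hθ1 : θ ≤ 1) (hδ0 : 0 ≤ δ) (hθk : 1 - θ = kc) : x ≤ kc + 2*δ := by
  nlinarith [mul_le_mul_of_nonneg_left hB hθ0]

private lemma arith_hH {ε L c₁ NN : ℝ} (hε0 : 0 < ε) (hε1 : ε < 1/4) (hL0 : 0 ≤ L)
    (hc₁ : 1 ≤ c₁) (hNN : 0 < NN) :
    2*(c₁*ε*L)*(NN - 2*(ε*NN)) ≤ 2*c₁*L*(ε*NN) := by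
  nlinarith [mul_nonneg (mul_nonneg (mul_nonneg (mul_nonneg
    (show (0:ℝ) ≤ c₁ by linarith) hε0.le) hε0.le) hL0) hNN.le]

private lemma arith_ptwise {a c ε D : ℝ} (hε0 : 0 < ε) (hD : ε * D = c^2) :
    a^2 + 2*c*a ≤ (1+ε)*a^2 + D := by
  nlinarith [sq_nonneg (ε*a - c), hε0, sq_nonneg a]

private lemma arith_poly {ε c₁ c₃ L R : ℝ} (hε0 : 0 < ε) (hε1 : ε < 1/4) (hc₁ : 1 ≤ c₁)
    (hc₃ : 5*c₁ ≤ c₃) (hL : 1.38 ≤ L) (hR : ε^2*L ≤ R) (hR0 : 0 ≤ R) :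
    (1+ε)*(1+2*c₁*L)*ε^2 + R*ε ≤ c₃*R := by
  have hL0 : (0:ℝ) ≤ L := by linarith
  have hrc : R ≤ c₁*R := by nlinarith [mul_nonneg (show (0:ℝ) ≤ c₁ - 1 by linarith) hR0]
  have ht1 : (1+ε)*ε^2 ≤ ε^2*L := by
    nlinarith [mul_nonneg (sq_nonneg ε) (show (0:ℝ) ≤ L - 1 - ε by linarith)]
  have e1 : (1+ε)*ε^2 ≤ c₁*R := le_trans ht1 (le_trans hR hrc)
  have hP2 : c₁*(ε^2*L) ≤ c₁*R := mul_le_mul_of_nonneg_left hR (by linarith)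
  have hQ0 : (0:ℝ) ≤ c₁*(ε^2*L) := mul_nonneg (by linarith) (mul_nonneg (sq_nonneg ε) hL0)
  have ht2 : 2*(1+ε)*(c₁*L*ε^2) ≤ (5/2)*(c₁*R) := by nlinarith [hP2, hQ0, hε1, hε0]
  have e3 : R*ε ≤ (1/4)*(c₁*R) := by nlinarith [hR0, hε1, hε0, hc₁]
  have e4 : (0:ℝ) ≤ c₁*R := mul_nonneg (by linarith) hR0
  have e5 : 5*(c₁*R) ≤ c₃*R := by
    nlinarith [mul_nonneg (show (0:ℝ) ≤ c₃ - 5*c₁ by linarith) hR0]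
  nlinarith [e1, ht2, e3, e4, e5]

private lemma arith_num {ε c₁ c₃ L R : ℝ} (hε0 : 0 < ε) (hε1 : ε < 1/4) (hc₁ : 1 ≤ c₁)
    (hc₃ : 5*c₁ ≤ c₃) (hL : 1.38 ≤ L) (hR : ε^2*L ≤ R) (hR0 : 0 ≤ R) :
    (1+ε)*(1+2*c₁*L) + R/ε ≤ c₃*R/ε^2 := by
  have hpoly := arith_poly hε0 hε1 hc₁ hc₃ hL hR hR0
  have hε2 : (0:ℝ) < ε^2 := by positivity
  have expand : c₃*R/ε^2 - ((1+ε)*(1+2*c₁*L) + R/ε)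
      = (c₃*R - ((1+ε)*(1+2*c₁*L)*ε^2 + R*ε))/ε^2 := by
    field_simp
  have h6 : 0 ≤ (c₃*R - ((1+ε)*(1+2*c₁*L)*ε^2 + R*ε))/ε^2 :=
    div_nonneg (by linarith [hpoly]) hε2.le
  linarith [expand, h6]

end Aux

/-- there is a good sample with small gradient coordinate. -/
theorem stmt_2 {d N : ℕ} (X : Matrix (Fin d) (Fin N) ℝ) (μs : Fin d → ℝ)
    (G B : Finset (Fin N)) (ε c₁ c₂ c₃ : ℝ)
    (hGB : Disjoint G B) (hUnion : G ∪ B = Finset.univ)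
    (hGcard : (G.card : ℝ) = (1 - ε) * N) (hBcard : (B.card : ℝ) = ε * N)
    (hε0 : 0 < ε) (hε1 : ε < 1 / 4)
    (hc₁ : 1 ≤ c₁) (hc₂ : 1 ≤ c₂) (hc₃ : 5 * c₁ ≤ c₃)
    (hconc : ∀ v ∈ deltaSet N (2 * ε),
      specNorm ((∑ i ∈ G, v i • Matrix.vecMulVec (Xᵀ i - μs) (Xᵀ i - μs)) - 1) ≤
        c₁ * ε * Real.log (1 / ε))
    (w : Fin N → ℝ) (hw : w ∈ deltaSet N (2 * ε))
    (u : Fin d → ℝ) (hu : vnorm u = 1)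
    (hr : c₂ * ε * Real.sqrt (Real.log (1 / ε)) ≤ vnorm (muW X w - μs)) :
    ∃ j ∈ G, w j < 1 / ((1 - 2 * ε) * N) ∧
      gradFw X w u j - (u ⬝ᵥ μs) * (u ⬝ᵥ (μs - (2 : ℝ) • muW X w)) ≤
        c₃ * vnorm (muW X w - μs) ^ 2 / ε ^ 2 := by
    classical
  obtain ⟨hwsum, hwbd⟩ := hw
  have hN : 0 < N := by
    rcases Nat.eq_zero_or_pos N with h | h
    · exfalso; subst h; simpa using hwsum
    · exact h
  set r : ℝ := vnorm (muW X w - μs) with hrdef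
  set NN : ℝ := (N : ℝ) with hNN
  have hNN0 : 0 < NN := by rw [hNN]; exact_mod_cast hN
  set k : ℕ := B.card with hkdef
  have hk : (k : ℝ) = ε * NN := hBcard
  have hkpos : 0 < k := by
    have h1 : (0:ℝ) < (k:ℝ) := by rw [hk]; positivity
    exact_mod_cast h1
  set cap : ℝ := 1 / ((1 - 2*ε) * NN) with hcapdef
  have hden : (1 - 2*ε) * NN = NN - 2*(k:ℝ) := by rw [hk]; ring
  have hdenpos : 0 < NN - 2*(k:ℝ) := by
    rw [← hden]; exact mul_pos (by linarith) hNN0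
  have hcap' : cap = 1/(NN - 2*(k:ℝ)) := by rw [hcapdef, hden]
  have hcappos : 0 < cap := by rw [hcap']; positivity
  have hcapmul : cap * (NN - 2*(k:ℝ)) = 1 := by
    rw [hcap']; field_simp
  -- cardinalities
  have hGBcard : G.card + B.card = N := by
    rw [← Finset.card_union_of_disjoint hGB, hUnion, Finset.card_univ, Fintype.card_fin]
  have h3k : 3 * k < N := by
    have h3 : 3 * (k:ℝ) < NN := by rw [hk]; exact arith_3k hNN0 hε0 hε1
    rw [hNN] at h3
    exact_mod_cast h3
  have hGcardR : (G.card : ℝ) = NN - (k:ℝ) := by rw [hGcard, hk]; ring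
  have hGcardN : G.card = N - k := by omega
  -- log facts
  set L : ℝ := Real.log (1/ε) with hLdef
  have hL138 : (1.38 : ℝ) ≤ L := by
    have h4 : (4:ℝ) ≤ 1/ε := by rw [le_div_iff₀ hε0]; linarith
    have h1 : Real.log 4 ≤ L := Real.log_le_log (by norm_num) h4
    have h2 : Real.log 4 = 2 * Real.log 2 := by
      rw [show (4:ℝ) = 2^2 by norm_num, Real.log_pow]; push_cast; ring
    have h5 := Real.log_two_gt_d9
    linarith
  have hL0 : (0:ℝ) ≤ L := by linarith
  set δ : ℝ := c₁ * ε * L with hδdef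
  have hδ0 : 0 ≤ δ := by
    rw [hδdef]; exact mul_nonneg (mul_nonneg (by linarith) hε0.le) hL0
  -- r facts
  have hr0 : 0 ≤ r := Real.sqrt_nonneg _
  have hrsq : ε^2 * L ≤ r^2 := by
    have h1 : (c₂ * ε * Real.sqrt L)^2 ≤ r^2 := by
      apply pow_le_pow_left₀ (by positivity) hr
    have h2 : (c₂ * ε * Real.sqrt L)^2 = c₂^2 * ε^2 * L := by
      rw [mul_pow, mul_pow, Real.sq_sqrt hL0]
    rw [h2] at h1
    exact arith_hrsq hε0 hL0 hc₂ h1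
  have husq : ∑ i, u i ^ 2 = 1 := vnorm_one_sq u hu
  have huu : u ⬝ᵥ u = 1 := by
    simpa [dotProduct, pow_two] using husq
  -- the key concentration consequence
  have key : ∀ v ∈ deltaSet N (2*ε), |(∑ i ∈ G, v i * ((Xᵀ i - μs) ⬝ᵥ u) ^ 2) - 1| ≤ δ := by
    intro v hv
    have h1 := hconc v hv
    have h2 := rayleigh' ((∑ i ∈ G, v i • Matrix.vecMulVec (Xᵀ i - μs) (Xᵀ i - μs)) - 1) u husq
    have h3 : u ⬝ᵥ ((∑ i ∈ G, v i • Matrix.vecMulVec (Xᵀ i - μs) (Xᵀ i - μs)) - 1).mulVec u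
        = (∑ i ∈ G, v i * ((Xᵀ i - μs) ⬝ᵥ u) ^ 2) - 1 := by
      rw [Matrix.sub_mulVec, dotProduct_sub, Matrix.one_mulVec, quadform_eqX, huu]
    rw [← h3]
    exact h2.trans h1
  -- the set S of good indices below the cap
  set S : Finset (Fin N) := G.filter (fun j => w j < cap) with hSdef
  have hScard : k ≤ S.card := by
    set T : Finset (Fin N) := G.filter (fun j => ¬ w j < cap) with hTdef
    have hSTcard : S.card + T.card = G.card :=
      Finset.card_filter_add_card_filter_not (fun j => w j < cap)
    have hTbound : (T.card:ℝ) * cap ≤ 1 := by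
      have h1 : ∑ i ∈ T, cap ≤ ∑ i ∈ T, w i :=
        Finset.sum_le_sum (fun i hi => not_lt.mp (Finset.mem_filter.mp hi).2)
      have h2 : ∑ i ∈ T, w i ≤ 1 := by
        rw [← hwsum]
        exact Finset.sum_le_sum_of_subset_of_nonneg (Finset.subset_univ T)
          (fun i _ _ => (hwbd i).1)
      have h3 : ∑ i ∈ T, cap = (T.card:ℝ) * cap := by rw [Finset.sum_const, nsmul_eq_mul]
      linarith
    have hTR : (T.card:ℝ) ≤ NN - 2*(k:ℝ) := by
      have h4 := mul_le_mul_of_nonneg_right hTbound hdenpos.le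
      rw [mul_assoc, hcapmul, mul_one, one_mul] at h4
      exact h4
    have hcast : (k:ℝ) ≤ (S.card:ℝ) := by
      have h5 : (S.card:ℝ) + (T.card:ℝ) = (G.card:ℝ) := by exact_mod_cast hSTcard
      rw [hGcardR] at h5
      linarith
    exact_mod_cast hcast
  obtain ⟨S', hS'S, hS'card⟩ := Finset.exists_subset_card_eq hScard
  have hS'G : S' ⊆ G := hS'S.trans (Finset.filter_subset _ _)
  have hS'ne : S'.Nonempty := Finset.card_pos.mp (by rw [hS'card]; exact hkpos)
  have h2kN : 2 * k ≤ N := by omega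
  have hGS'cardN : (G \ S').card = N - 2*k := by
    rw [Finset.card_sdiff_of_subset hS'G, hS'card, hGcardN]; omega
  have hGS'card : ((G \ S').card : ℝ) = NN - 2*(k:ℝ) := by
    rw [hGS'cardN, Nat.cast_sub h2kN]; push_cast [hNN]; ring
  -- weights
  set θ : ℝ := (NN - 3*(k:ℝ))/(NN - 2*(k:ℝ)) with hθdef
  have h3kR : 3*(k:ℝ) ≤ NN := by
    have := h3k.le
    rw [hNN]; exact_mod_cast this
  have hθ0 : 0 ≤ θ := by
    rw [hθdef]; exact div_nonneg (by linarith) hdenpos.le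
  have hθ1 : θ ≤ 1 := by rw [hθdef, div_le_one hdenpos]; linarith
  have hθk : 1 - θ = (k:ℝ) * cap := by
    rw [hθdef, hcap']
    have hdne := hdenpos.ne'
    field_simp
    have ht : (NN - (k:ℝ)*2) * (NN - (k:ℝ)*2)⁻¹ = 1 := mul_inv_cancel₀ (by intro h; linarith)
    linear_combination (-1:ℝ)*ht
  set β : ℝ := cap * θ with hβdef
  have hβ0 : 0 ≤ β := mul_nonneg hcappos.le hθ0
  have hβcap : β ≤ cap := by
    calc β = cap * θ := hβdef
      _ ≤ cap * 1 := mul_le_mul_of_nonneg_left hθ1 hcappos.le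
      _ = cap := mul_one cap
  set v₁ : Fin N → ℝ :=
    fun i => (if i ∈ S' then cap else 0) + (if i ∈ G \ S' then β else 0) with hv₁def
  set v₂ : Fin N → ℝ := fun i => if i ∈ G \ S' then cap else 0 with hv₂def
  -- membership of v₂
  have hv₂sum : ∑ i, v₂ i = 1 := by
    rw [hv₂def]
    rw [Finset.sum_ite_mem, Finset.univ_inter, Finset.sum_const, nsmul_eq_mul, hGS'card]
    linarith only [hcapmul]
  have hv₂bd : ∀ i, 0 ≤ v₂ i ∧ v₂ i ≤ cap := by
    intro i
    rw [hv₂def]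
    by_cases h : i ∈ G \ S' <;> simp [h, hcappos.le]
  have hv₂mem : v₂ ∈ deltaSet N (2*ε) := ⟨hv₂sum, hv₂bd⟩
  -- membership of v₁
  have hv₁sum : ∑ i, v₁ i = 1 := by
    rw [hv₁def]
    rw [Finset.sum_add_distrib]
    rw [Finset.sum_ite_mem, Finset.univ_inter, Finset.sum_const, nsmul_eq_mul, hS'card]
    rw [Finset.sum_ite_mem, Finset.univ_inter, Finset.sum_const, nsmul_eq_mul, hGS'card]
    rw [hβdef, hθdef, hcap']
    have hdne := hdenpos.ne'
    field_simp
    have ht : (-((k:ℝ)*2) + NN) * (-((k:ℝ)*2) + NN)⁻¹ = 1 := mul_inv_cancel₀ (by intro h; linarith)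
    linear_combination ht
  have hv₁bd : ∀ i, 0 ≤ v₁ i ∧ v₁ i ≤ cap := by
    intro i
    rw [hv₁def]
    by_cases h1 : i ∈ S'
    · have h2 : i ∉ G \ S' := fun hm => (Finset.mem_sdiff.mp hm).2 h1
      simp [h1, h2, hcappos.le]
    · by_cases h2 : i ∈ G \ S' <;> simp [h1, h2, hβ0, hβcap, hcappos.le]
  have hv₁mem : v₁ ∈ deltaSet N (2*ε) := ⟨hv₁sum, hv₁bd⟩
  -- sums over G
  set E1 : ℝ := ∑ i ∈ S', ((Xᵀ i - μs) ⬝ᵥ u) ^ 2 with hE1def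
  set E2 : ℝ := ∑ i ∈ G \ S', ((Xᵀ i - μs) ⬝ᵥ u) ^ 2 with hE2def
  have hGv₁ : ∑ i ∈ G, v₁ i * ((Xᵀ i - μs) ⬝ᵥ u) ^ 2 = cap * E1 + β * E2 := by
    rw [hE1def, hE2def, hv₁def]
    simp only [add_mul, ite_mul, zero_mul]
    rw [Finset.sum_add_distrib, Finset.sum_ite_mem, Finset.sum_ite_mem]
    rw [Finset.inter_eq_right.mpr hS'G, Finset.inter_eq_right.mpr (Finset.sdiff_subset)]
    rw [Finset.mul_sum, Finset.mul_sum]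
  have hGv₂ : ∑ i ∈ G, v₂ i * ((Xᵀ i - μs) ⬝ᵥ u) ^ 2 = cap * E2 := by
    rw [hE2def, hv₂def]
    simp only [ite_mul, zero_mul]
    rw [Finset.sum_ite_mem]
    rw [Finset.inter_eq_right.mpr (Finset.sdiff_subset)]
    rw [Finset.mul_sum]
  have h1 := key v₁ hv₁mem
  rw [hGv₁, abs_le] at h1
  have h2 := key v₂ hv₂mem
  rw [hGv₂, abs_le] at h2
  -- the bound on E1
  have hE1bd : E1 ≤ (k:ℝ) * (1 + 2*c₁*L) := by
    have hA : cap*E1 + θ*(cap*E2) ≤ 1 + δ := by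
      have hβθ : β*E2 = θ*(cap*E2) := by rw [hβdef]; ring
      linarith only [h1.2, hβθ]
    have hB : 1 - δ ≤ cap*E2 := by linarith only [h2.1]
    have hE : cap*E1 ≤ (k:ℝ)*cap + 2*δ := arith_hE hA hB hθ0 hθ1 hδ0 hθk
    have hF : E1 ≤ ((k:ℝ)*cap + 2*δ)*(NN - 2*(k:ℝ)) := by
      have hE1eq : E1 = (cap*E1)*(NN - 2*(k:ℝ)) := by
        rw [mul_comm cap E1, mul_assoc, hcapmul, mul_one]
      rw [hE1eq]
      exact mul_le_mul_of_nonneg_right hE hdenpos.le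
    have hG1 : ((k:ℝ)*cap + 2*δ)*(NN - 2*(k:ℝ)) = (k:ℝ) + 2*δ*(NN - 2*(k:ℝ)) := by
      rw [add_mul, mul_assoc, hcapmul, mul_one]
    have hH : 2*δ*(NN - 2*(k:ℝ)) ≤ 2*c₁*L*(k:ℝ) := by
      rw [hδdef, hk]
      exact arith_hH hε0 hε1 hL0 hc₁ hNN0
    linarith only [hF, hG1, hH]
  -- Cauchy-Schwarz for the cross term
  have hc2 : (u ⬝ᵥ μs - u ⬝ᵥ muW X w)^2 ≤ r^2 := by
    have hz : u ⬝ᵥ μs - u ⬝ᵥ muW X w = ∑ i, u i * (μs i - muW X w i) := by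
      simp only [dotProduct]
      rw [← Finset.sum_sub_distrib]
      exact Finset.sum_congr rfl fun i _ => by ring
    have hCS := Finset.sum_mul_sq_le_sq_mul_sq Finset.univ u (fun i => μs i - muW X w i)
    have hrr : r^2 = ∑ i, (μs i - muW X w i)^2 := by
      rw [hrdef]
      rw [show vnorm (muW X w - μs) = Real.sqrt (∑ i, (muW X w - μs) i ^ 2) from rfl]
      rw [Real.sq_sqrt (Finset.sum_nonneg fun i _ => sq_nonneg _)]
      exact Finset.sum_congr rfl fun i _ => by simp [Pi.sub_apply]; ring
    calc (u ⬝ᵥ μs - u ⬝ᵥ muW X w)^2 = (∑ i, u i * (μs i - muW X w i))^2 := by rw [hz]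
      _ ≤ (∑ i, u i^2) * ∑ i, (μs i - muW X w i)^2 := hCS
      _ = r^2 := by rw [husq, one_mul, hrr]
  -- the pointwise identity
  have hidentity : ∀ j, gradFw X w u j - (u ⬝ᵥ μs) * (u ⬝ᵥ (μs - (2:ℝ) • muW X w))
      = ((Xᵀ j - μs) ⬝ᵥ u)^2 + 2*(u ⬝ᵥ μs - u ⬝ᵥ muW X w)*((Xᵀ j - μs) ⬝ᵥ u) := by
    intro j
    have e1 : u ⬝ᵥ (μs - (2:ℝ) • muW X w) = u ⬝ᵥ μs - 2*(u ⬝ᵥ muW X w) := by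
      rw [dotProduct_sub, dotProduct_smul]
      simp [smul_eq_mul]
    have e2 : (Xᵀ j - μs) ⬝ᵥ u = Xᵀ j ⬝ᵥ u - u ⬝ᵥ μs := by
      rw [sub_dotProduct, dotProduct_comm μs u]
    rw [e1, e2]
    show (Xᵀ j ⬝ᵥ u) ^ 2 - 2 * (u ⬝ᵥ X.mulVec w) * (Xᵀ j ⬝ᵥ u)
        - (u ⬝ᵥ μs) * (u ⬝ᵥ μs - 2*(u ⬝ᵥ muW X w)) = _
    show _ = (Xᵀ j ⬝ᵥ u - u ⬝ᵥ μs)^2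
        + 2*(u ⬝ᵥ μs - u ⬝ᵥ X.mulVec w)*(Xᵀ j ⬝ᵥ u - u ⬝ᵥ μs)
    show (Xᵀ j ⬝ᵥ u) ^ 2 - 2 * (u ⬝ᵥ X.mulVec w) * (Xᵀ j ⬝ᵥ u)
        - (u ⬝ᵥ μs) * (u ⬝ᵥ μs - 2*(u ⬝ᵥ X.mulVec w)) = _
    ring
  -- pointwise bound
  set c : ℝ := u ⬝ᵥ μs - u ⬝ᵥ muW X w with hcdef
  have hptwise : ∀ j ∈ S', gradFw X w u j - (u ⬝ᵥ μs) * (u ⬝ᵥ (μs - (2:ℝ) • muW X w))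
      ≤ (1+ε)*((Xᵀ j - μs) ⬝ᵥ u)^2 + c^2/ε := by
    intro j _
    rw [hidentity j]
    have hD : ε * (c^2/ε) = c^2 := by field_simp
    exact arith_ptwise hε0 hD
  have hsum1 : ∑ j ∈ S', (gradFw X w u j - (u ⬝ᵥ μs) * (u ⬝ᵥ (μs - (2:ℝ) • muW X w)))
      ≤ (1+ε)*E1 + (k:ℝ)*(c^2/ε) := by
    calc ∑ j ∈ S', (gradFw X w u j - (u ⬝ᵥ μs) * (u ⬝ᵥ (μs - (2:ℝ) • muW X w)))
        ≤ ∑ j ∈ S', ((1+ε)*((Xᵀ j - μs) ⬝ᵥ u)^2 + c^2/ε) := Finset.sum_le_sum hptwise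
      _ = (1+ε)*E1 + (S'.card:ℝ)*(c^2/ε) := by
          rw [Finset.sum_add_distrib, ← Finset.mul_sum, Finset.sum_const, nsmul_eq_mul, hE1def]
      _ = (1+ε)*E1 + (k:ℝ)*(c^2/ε) := by rw [hS'card]
  -- the numeric inequality
  have hnum : (1+ε)*(1+2*c₁*L) + r^2/ε ≤ c₃*r^2/ε^2 :=
    arith_num hε0 hε1 hc₁ hc₃ hL138 hrsq (sq_nonneg r)
  -- assemble the sum bound
  have hkR0 : (0:ℝ) ≤ (k:ℝ) := Nat.cast_nonneg k
  have hc2ε : c^2/ε ≤ r^2/ε := (div_le_div_iff_of_pos_right hε0).mpr hc2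
  have hfinal : (1+ε)*E1 + (k:ℝ)*(c^2/ε) ≤ (k:ℝ)*(c₃*r^2/ε^2) := by
    have ha : (1+ε)*E1 ≤ (1+ε)*((k:ℝ)*(1+2*c₁*L)) :=
      mul_le_mul_of_nonneg_left hE1bd (by linarith)
    have hb : (k:ℝ)*(c^2/ε) ≤ (k:ℝ)*(r^2/ε) := mul_le_mul_of_nonneg_left hc2ε hkR0
    have hcc : (1+ε)*((k:ℝ)*(1+2*c₁*L)) + (k:ℝ)*(r^2/ε)
        = (k:ℝ) * ((1+ε)*(1+2*c₁*L) + r^2/ε) := by ring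
    have hd : (k:ℝ) * ((1+ε)*(1+2*c₁*L) + r^2/ε) ≤ (k:ℝ)*(c₃*r^2/ε^2) :=
      mul_le_mul_of_nonneg_left hnum hkR0
    linarith only [ha, hb, hcc, hd]
  have hsumtotal : ∑ j ∈ S', (gradFw X w u j - (u ⬝ᵥ μs) * (u ⬝ᵥ (μs - (2:ℝ) • muW X w)))
      ≤ ∑ j ∈ S', (c₃ * r^2 / ε^2) := by
    rw [Finset.sum_const, hS'card, nsmul_eq_mul]
    exact le_trans hsum1 hfinal
  obtain ⟨j, hjS', hjle⟩ := Finset.exists_le_of_sum_le hS'ne hsumtotal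
  refine ⟨j, hS'G hjS', ?_, hjle⟩
  exact (Finset.mem_filter.mp (hS'S hjS')).2
end

section
/- Let Z ∈ ℝ^{n×n} be symmetric and ρ > 0. For every symmetric positive definite Y ∈ ℝ^{n×n} with tr(Y) = 1, tr(YZ) − (1/ρ)·tr(Y·log Y) ≤ (1/ρ)·ln tr(exp(ρZ)), where log Y denotes the matrix logarithm of the positive definite matrix Y (obtained by applying the real logarithm to its eigenvalues via the spectral theorem). Moreover, equality holds for Y = exp(ρZ)/tr(exp(ρZ)). -/
open Matrix Finset RealInnerProductSpace

section auxGibbs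

attribute [local instance] Matrix.instL2OpNormedRing Matrix.instL2OpNormedAlgebra

variable {m : ℕ}

private lemma trace_conj_diag (U : Matrix (Fin m) (Fin m) ℝ) (hU : star U * U = 1)
    (c : Fin m → ℝ) :
    (U * Matrix.diagonal c * star U).trace = ∑ i, c i := by
  rw [Matrix.trace_mul_cycle, hU, one_mul, Matrix.trace_diagonal]

private lemma trace_conj_diag_mul_conj_diag (U : Matrix (Fin m) (Fin m) ℝ)
    (hU : star U * U = 1) (c d : Fin m → ℝ) :
    ((U * Matrix.diagonal c * star U) * (U * Matrix.diagonal d * star U)).trace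
      = ∑ i, c i * d i := by
  have h : (U * Matrix.diagonal c * star U) * (U * Matrix.diagonal d * star U)
      = U * Matrix.diagonal (fun i => c i * d i) * star U := by
    calc (U * Matrix.diagonal c * star U) * (U * Matrix.diagonal d * star U)
        = U * Matrix.diagonal c * ((star U * U) * (Matrix.diagonal d * star U)) := by
          simp only [Matrix.mul_assoc]
      _ = U * (Matrix.diagonal c * Matrix.diagonal d) * star U := by
          rw [hU, one_mul, Matrix.mul_assoc]; simp only [Matrix.mul_assoc]
      _ = _ := by rw [Matrix.diagonal_mul_diagonal]
  rw [h, trace_conj_diag U hU]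

private lemma trace_conj_diag_mul (U : Matrix (Fin m) (Fin m) ℝ) (c : Fin m → ℝ)
    (M : Matrix (Fin m) (Fin m) ℝ) :
    ((U * Matrix.diagonal c * star U) * M).trace
      = ∑ i, c i * ((star U * M * U) i i) := by
  have h1 : (U * Matrix.diagonal c * star U) * M
      = U * (Matrix.diagonal c * (star U * M)) := by
    simp only [Matrix.mul_assoc]
  have h2 : Matrix.diagonal c * (star U * M) * U = Matrix.diagonal c * (star U * M * U) := by
    simp only [Matrix.mul_assoc]
  rw [h1, Matrix.trace_mul_comm, h2, Matrix.trace]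
  simp [Matrix.diag, Matrix.diagonal_mul]

private lemma spectral_real {B : Matrix (Fin m) (Fin m) ℝ} (hB : B.IsHermitian) :
    B = (hB.eigenvectorUnitary : Matrix (Fin m) (Fin m) ℝ) * Matrix.diagonal hB.eigenvalues
      * star (hB.eigenvectorUnitary : Matrix (Fin m) (Fin m) ℝ) := by
  conv_lhs => rw [hB.spectral_theorem]
  congr

private lemma cfc_real {B : Matrix (Fin m) (Fin m) ℝ} (hB : B.IsHermitian) (f : ℝ → ℝ) :
    hB.cfc f = (hB.eigenvectorUnitary : Matrix (Fin m) (Fin m) ℝ)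
      * Matrix.diagonal (fun i => f (hB.eigenvalues i))
      * star (hB.eigenvectorUnitary : Matrix (Fin m) (Fin m) ℝ) := by
  rw [Matrix.IsHermitian.cfc]
  congr

private lemma exp_herm {B : Matrix (Fin m) (Fin m) ℝ} (hB : B.IsHermitian) :
    NormedSpace.exp B = hB.cfc Real.exp := by
  rw [← Matrix.IsHermitian.cfc_eq]
  exact (CFC.real_exp_eq_normedSpace_exp (a := B) hB).symm

private lemma peierls {B : Matrix (Fin m) (Fin m) ℝ} (hB : B.IsHermitian) (i : Fin m) :
    Real.exp (B i i) ≤ (NormedSpace.exp B) i i := by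
  set W : Matrix (Fin m) (Fin m) ℝ := (hB.eigenvectorUnitary : Matrix (Fin m) (Fin m) ℝ)
    with hW
  have hWr : W * star W = 1 := Unitary.mul_star_self_of_mem hB.eigenvectorUnitary.2
  have hrow : ∑ j, W i j ^ 2 = 1 := by
    have h := congrFun (congrFun hWr i) i
    simpa [Matrix.mul_apply, Matrix.one_apply, pow_two, Matrix.star_apply] using h
  have hBii : B i i = ∑ j, W i j ^ 2 * hB.eigenvalues j := by
    conv_lhs => rw [spectral_real hB]
    rw [Matrix.mul_assoc]
    simp only [Matrix.mul_apply, Matrix.diagonal_apply, ite_mul, zero_mul, Finset.sum_ite_eq,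
      Finset.mem_univ, if_true, Matrix.star_apply, star_trivial, ← hW]
    exact Finset.sum_congr rfl fun j _ => by ring
  have hexp : (NormedSpace.exp B) i i = ∑ j, W i j ^ 2 * Real.exp (hB.eigenvalues j) := by
    rw [exp_herm hB, cfc_real hB, Matrix.mul_assoc]
    simp only [Matrix.mul_apply, Matrix.diagonal_apply, ite_mul, zero_mul, Finset.sum_ite_eq,
      Finset.mem_univ, if_true, Matrix.star_apply, star_trivial, ← hW]
    exact Finset.sum_congr rfl fun j _ => by ring
  rw [hBii, hexp]
  have h := convexOn_exp.map_sum_le (t := Finset.univ) (w := fun j => W i j ^ 2)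
    (p := hB.eigenvalues) (fun j _ => sq_nonneg _) hrow (fun j _ => Set.mem_univ _)
  simpa [smul_eq_mul] using h

private lemma trace_exp_pos {m : ℕ} (hm : 0 < m) {A : Matrix (Fin m) (Fin m) ℝ}
    (hA : A.IsHermitian) : 0 < (NormedSpace.exp A).trace := by
  have h : (NormedSpace.exp A).trace = ∑ j, Real.exp (hA.eigenvalues j) := by
    rw [exp_herm hA, cfc_real hA,
      trace_conj_diag _ (Unitary.star_mul_self_of_mem hA.eigenvectorUnitary.2)]
  rw [h]
  exact Finset.sum_pos (fun j _ => Real.exp_pos _)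
    (Finset.univ_nonempty_iff.mpr ⟨⟨0, hm⟩⟩)

private lemma gibbs_ineq {m : ℕ} (hm : 0 < m) (Z : Matrix (Fin m) (Fin m) ℝ)
    (hZ : Z.IsHermitian) (ρ : ℝ) (hρ : 0 < ρ)
    (Y : Matrix (Fin m) (Fin m) ℝ) (hYpd : Y.PosDef) (htr : Y.trace = 1) :
    (Y * Z).trace - (1 / ρ) * (Y * matLog Y).trace ≤
      (1 / ρ) * Real.log (NormedSpace.exp (ρ • Z)).trace := by
  have hA : (ρ • Z).IsHermitian := by
    show (ρ • Z)ᴴ = ρ • Z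
    rw [Matrix.conjTranspose_smul, star_trivial, hZ.eq]
  set A := ρ • Z with hAdef
  set E := NormedSpace.exp A with hEdef
  set t := E.trace with htdef
  have ht : 0 < t := trace_exp_pos hm hA
  have hY : Y.IsHermitian := hYpd.1
  set p := hY.eigenvalues with hpdef
  have hp : ∀ i, 0 < p i := hYpd.eigenvalues_pos
  obtain ⟨U, hUl, hUr, hYdec, hmlog⟩ :
      ∃ U : Matrix (Fin m) (Fin m) ℝ, star U * U = 1 ∧ U * star U = 1 ∧
        Y = U * Matrix.diagonal p * star U ∧
        matLog Y = U * Matrix.diagonal (fun i => Real.log (p i)) * star U :=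
    ⟨(hY.eigenvectorUnitary : Matrix (Fin m) (Fin m) ℝ),
      Unitary.star_mul_self_of_mem hY.eigenvectorUnitary.2,
      Unitary.mul_star_self_of_mem hY.eigenvectorUnitary.2,
      spectral_real hY, (dif_pos hY).trans (cfc_real hY Real.log)⟩
  set B := star U * A * U with hBdef
  have hB : B.IsHermitian := by
    rw [hBdef, Matrix.star_eq_conjTranspose]
    exact Matrix.isHermitian_conjTranspose_mul_mul U hA
  have hexpB : NormedSpace.exp B = star U * E * U := by
    have hUinv : (star U)⁻¹ = U := Matrix.inv_eq_left_inv hUr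
    have hUnit : IsUnit (star U) := ⟨⟨star U, U, hUl, hUr⟩, rfl⟩
    have h1 : B = star U * A * (star U)⁻¹ := by rw [hUinv, hBdef]
    rw [h1, Matrix.exp_conj (star U) A hUnit, hUinv, hEdef]
  have hpsum : ∑ i, p i = 1 := by
    rw [← htr]
    conv_rhs => rw [hYdec]
    exact (trace_conj_diag U hUl p).symm
  have trYA : (Y * A).trace = ∑ i, p i * B i i := by
    rw [hBdef]
    conv_lhs => rw [hYdec]
    exact trace_conj_diag_mul U p A
  have trYZ : (Y * A).trace = ρ * (Y * Z).trace := by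
    rw [hAdef, Matrix.mul_smul, Matrix.trace_smul, smul_eq_mul]
  have trYlog : (Y * matLog Y).trace = ∑ i, p i * Real.log (p i) := by
    rw [hmlog]
    conv_lhs => rw [hYdec]
    exact trace_conj_diag_mul_conj_diag U hUl _ _
  have htB : t = ∑ i, (NormedSpace.exp B) i i := by
    have h1 : ∑ i, (NormedSpace.exp B) i i = (NormedSpace.exp B).trace := by
      simp [Matrix.trace, Matrix.diag]
    rw [h1, hexpB, Matrix.trace_mul_cycle, hUr, one_mul, htdef]
  -- Jensen step
  have jensen : Real.exp (∑ i, p i * (B i i - Real.log (p i))) ≤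
      ∑ i, p i * Real.exp (B i i - Real.log (p i)) := by
    have h := convexOn_exp.map_sum_le (t := Finset.univ) (w := p)
      (p := fun i => B i i - Real.log (p i)) (fun i _ => (hp i).le) hpsum
      (fun i _ => Set.mem_univ _)
    simpa [smul_eq_mul] using h
  have hterm : ∀ i, p i * Real.exp (B i i - Real.log (p i)) = Real.exp (B i i) := by
    intro i
    rw [Real.exp_sub, Real.exp_log (hp i), mul_comm, div_mul_cancel₀ _ (hp i).ne']
  have hsum_le : ∑ i, p i * Real.exp (B i i - Real.log (p i)) ≤ t := by
    rw [htB]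
    refine Finset.sum_le_sum fun i _ => ?_
    rw [hterm i]
    exact peierls hB i
  have hS : ∑ i, p i * (B i i - Real.log (p i)) ≤ Real.log t :=
    (Real.le_log_iff_exp_le ht).mpr (jensen.trans hsum_le)
  have hSexp : ∑ i, p i * (B i i - Real.log (p i))
      = ρ * (Y * Z).trace - (Y * matLog Y).trace := by
    rw [trYlog, ← trYZ, trYA, ← Finset.sum_sub_distrib]
    exact Finset.sum_congr rfl fun i _ => by ring
  have hfinal : (Y * Z).trace - (1 / ρ) * (Y * matLog Y).trace
      = (1 / ρ) * (ρ * (Y * Z).trace - (Y * matLog Y).trace) := by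
    field_simp
  rw [hfinal, ← hSexp]
  exact mul_le_mul_of_nonneg_left hS (by positivity)


private lemma gibbs_eq {m : ℕ} (hm : 0 < m) (Z : Matrix (Fin m) (Fin m) ℝ)
    (hZ : Z.IsHermitian) (ρ : ℝ) (hρ : 0 < ρ) :
    ((((NormedSpace.exp (ρ • Z)).trace)⁻¹ • NormedSpace.exp (ρ • Z)) * Z).trace -
        (1 / ρ) * ((((NormedSpace.exp (ρ • Z)).trace)⁻¹ • NormedSpace.exp (ρ • Z)) *
          matLog (((NormedSpace.exp (ρ • Z)).trace)⁻¹ • NormedSpace.exp (ρ • Z))).trace =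
      (1 / ρ) * Real.log (NormedSpace.exp (ρ • Z)).trace := by
  have hA : (ρ • Z).IsHermitian := by
    show (ρ • Z)ᴴ = ρ • Z
    rw [Matrix.conjTranspose_smul, star_trivial, hZ.eq]
  set A := ρ • Z with hAdef
  set E := NormedSpace.exp A with hEdef
  set t := E.trace with htdef
  have ht : 0 < t := trace_exp_pos hm hA
  have hE : E.IsHermitian := by rw [hEdef]; exact hA.exp
  have hY₀ : (t⁻¹ • E).IsHermitian := by
    show _ᴴ = _
    rw [Matrix.conjTranspose_smul, star_trivial, hE.eq]
  have hA' : IsSelfAdjoint A := hA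
  have hspec : ∀ x ∈ spectrum ℝ E, 0 < x := by
    intro x hx
    have h1 : E = cfc Real.exp A := by
      rw [hEdef]; exact (CFC.real_exp_eq_normedSpace_exp (a := A) hA).symm
    rw [h1, cfc_map_spectrum (R := ℝ) (f := Real.exp) (a := A) hA'] at hx
    obtain ⟨y, -, rfl⟩ := hx
    exact Real.exp_pos y
  have hlog : matLog (t⁻¹ • E) = Real.log t⁻¹ • (1 : Matrix (Fin m) (Fin m) ℝ) + A := by
    have h0 : matLog (t⁻¹ • E) = cfc Real.log (t⁻¹ • E) :=
      (dif_pos hY₀).trans (hY₀.cfc_eq Real.log).symm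
    have h1 : cfc Real.log (t⁻¹ • E) = CFC.log (t⁻¹ • E) := rfl
    rw [h0, h1, CFC.log_smul E (fun x hx => (hspec x hx).ne') (inv_pos.mpr ht).ne' hE, hEdef, CFC.log_exp A hA,
      Algebra.algebraMap_eq_smul_one]
  have htrY₀ : (t⁻¹ • E).trace = 1 := by
    rw [Matrix.trace_smul, ← htdef, smul_eq_mul, inv_mul_cancel₀ ht.ne']
  have h2 : ((t⁻¹ • E) * matLog (t⁻¹ • E)).trace
      = Real.log t⁻¹ + ρ * ((t⁻¹ • E) * Z).trace := by
    rw [hlog, Matrix.mul_add, Matrix.trace_add]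
    congr 1
    · rw [mul_smul_comm, mul_one, Matrix.trace_smul, smul_eq_mul, htrY₀, mul_one]
    · rw [hAdef, Matrix.mul_smul, Matrix.trace_smul, smul_eq_mul]
  rw [h2, Real.log_inv]
  field_simp
  ring

end auxGibbs

/-- duality (Gibbs variational principle) for the matrix softmax. -/
theorem stmt_8 {n : ℕ} (Z : Matrix (Fin n) (Fin n) ℝ) (hZ : Z.IsHermitian)
    (ρ : ℝ) (hρ : 0 < ρ) :
    (∀ Y : Matrix (Fin n) (Fin n) ℝ, Y.PosDef → Y.trace = 1 →
      (Y * Z).trace - (1 / ρ) * (Y * matLog Y).trace ≤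
        (1 / ρ) * Real.log (NormedSpace.exp (ρ • Z)).trace) ∧
    (((((NormedSpace.exp (ρ • Z)).trace)⁻¹ • NormedSpace.exp (ρ • Z)) * Z).trace -
        (1 / ρ) * (((((NormedSpace.exp (ρ • Z)).trace)⁻¹ • NormedSpace.exp (ρ • Z)) *
          matLog (((NormedSpace.exp (ρ • Z)).trace)⁻¹ • NormedSpace.exp (ρ • Z))).trace) =
      (1 / ρ) * Real.log (NormedSpace.exp (ρ • Z)).trace) := by
  constructor
  · intro Y hYpd htr
    rcases Nat.eq_zero_or_pos n with hn | hn
    · exfalso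
      subst hn
      simp [Matrix.trace] at htr
    · exact gibbs_ineq hn Z hZ ρ hρ Y hYpd htr
  · rcases Nat.eq_zero_or_pos n with hn | hn
    · subst hn
      simp [Matrix.trace]
    · exact gibbs_eq hn Z hZ ρ hρ
end

section
/- Let X : ℝ → ℝ^{n×n} be a function taking symmetric-matrix values that is differentiable at a point t with derivative X'(t). Then the map s ↦ exp(X(s)) is differentiable at t, with derivative ∫₀¹ exp(α·X(t)) · X'(t) · exp((1−α)·X(t)) dα, where the integral is an ℝ^{n×n}-valued integral over α ∈ [0,1] and exp denotes the matrix exponential. -/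
open Matrix Finset RealInnerProductSpace

set_option linter.unusedSectionVars false
set_option maxHeartbeats 1000000
set_option synthInstance.maxHeartbeats 400000

section GeneralBanach

open NormedSpace intervalIntegral Asymptotics Filter Topology

variable {𝔸 : Type*} [NormedRing 𝔸] [NormedAlgebra ℝ 𝔸] [CompleteSpace 𝔸]

theorem my_norm_exp_le [NormOneClass 𝔸] (x : 𝔸) : ‖exp x‖ ≤ Real.exp ‖x‖ := by
  rw [exp_eq_tsum ℝ]
  refine (norm_tsum_le_tsum_norm (norm_expSeries_summable' x)).trans ?_
  rw [Real.exp_eq_exp_ℝ, exp_eq_tsum ℝ]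
  refine Summable.tsum_le_tsum (fun n => ?_) (norm_expSeries_summable' x) (expSeries_summable' (𝕂 := ℝ) ‖x‖)
  rw [norm_smul, smul_eq_mul, norm_inv, Real.norm_natCast]
  gcongr
  exact norm_pow_le x n

theorem norm_exp_smul_le [NormOneClass 𝔸] {a : ℝ} (h0 : |a| ≤ 1) (M : 𝔸) : ‖exp (a•M)‖ ≤ Real.exp ‖M‖ := by
  refine (my_norm_exp_le _).trans (Real.exp_le_exp.2 ?_)
  rw [norm_smul, Real.norm_eq_abs]
  nlinarith [norm_nonneg M, abs_nonneg a]

theorem norm_mul3_le (a b c : 𝔸) : ‖a*b*c‖ ≤ ‖a‖*‖b‖*‖c‖ :=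
  (norm_mul_le _ _).trans (mul_le_mul_of_nonneg_right (norm_mul_le a b) (norm_nonneg c))

theorem deriv_right (A : 𝔸) (a : ℝ) :
    HasDerivAt (fun α : ℝ => exp ((1-α)•A)) (-(exp ((1-a)•A) * A)) a := by
  have h := (hasDerivAt_exp_smul_const (𝕂 := ℝ) A (1-a)).scomp a ((hasDerivAt_id a).const_sub 1)
  simpa [Function.comp_def] using h

theorem cont_exp_smul (f : ℝ → ℝ) (hf : Continuous f) (P : 𝔸) :
    Continuous fun α : ℝ => exp (f α • P) :=
  (continuous_iff_continuousAt.2 fun x => (exp_analytic (𝕂 := ℝ) x).continuousAt).comp (hf.smul continuous_const)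

theorem duhamel (P Q : 𝔸) :
    exp P - exp Q = ∫ α in (0:ℝ)..1, exp (α•P) * (P - Q) * exp ((1-α)•Q) := by
  have hcont : Continuous fun α : ℝ => exp (α•P) * (P - Q) * exp ((1-α)•Q) :=
    ((cont_exp_smul _ continuous_id P).mul continuous_const).mul
      (cont_exp_smul _ (continuous_const.sub continuous_id) Q)
  have key : ∀ a ∈ Set.uIcc (0:ℝ) 1, HasDerivAt (fun α : ℝ => exp (α•P) * exp ((1-α)•Q))
      (exp (a•P) * (P - Q) * exp ((1-a)•Q)) a := by
    intro a _
    have h1 : HasDerivAt (fun α : ℝ => exp (α•P)) (exp (a•P) * P) a :=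
      hasDerivAt_exp_smul_const (𝕂 := ℝ) P a
    have h := h1.mul (deriv_right Q a)
    have hc : exp ((1-a)•Q) * Q = Q * exp ((1-a)•Q) :=
      (((Commute.refl Q).smul_right ((1:ℝ)-a)).exp_right).symm.eq
    convert h using 1
    · rfl
    rw [mul_neg, mul_sub, hc, sub_mul, ← mul_assoc]
    abel
  have := intervalIntegral.integral_eq_sub_of_hasDerivAt key (hcont.intervalIntegrable 0 1)
  rw [this]
  norm_num [exp_zero]

theorem norm_exp_sub_exp_le [NormOneClass 𝔸] (P Q : 𝔸) :
    ‖exp P - exp Q‖ ≤ Real.exp ‖P‖ * ‖P - Q‖ * Real.exp ‖Q‖ := by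
  rw [duhamel P Q]
  have h : ∀ β ∈ Set.uIoc (0:ℝ) 1,
      ‖exp (β•P) * (P - Q) * exp ((1-β)•Q)‖ ≤ Real.exp ‖P‖ * ‖P - Q‖ * Real.exp ‖Q‖ := by
    intro β hβ
    rw [Set.uIoc_of_le (by norm_num : (0:ℝ) ≤ 1)] at hβ
    obtain ⟨h1, h2⟩ := hβ
    refine (norm_mul3_le _ _ _).trans ?_
    gcongr
    · exact norm_exp_smul_le (by rw [abs_of_pos h1]; exact h2) P
    · exact norm_exp_smul_le (by rw [abs_of_nonneg (by linarith)]; linarith) Q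
  have := intervalIntegral.norm_integral_le_of_norm_le_const h
  simpa using this

theorem exp_hasDerivAt_general [NormOneClass 𝔸] (X : ℝ → 𝔸) (X' : 𝔸) (t : ℝ) (hd : HasDerivAt X X' t) :
    HasDerivAt (fun s => exp (X s))
      (∫ α in (0:ℝ)..1, exp (α • X t) * X' * exp ((1 - α) • X t)) t := by
  set A := X t with hA
  set B := X' with hB
  set L := ∫ α in (0:ℝ)..1, exp (α • A) * B * exp ((1 - α) • A) with hL
  rw [hasDerivAt_iff_isLittleO]
  have c3 : Continuous fun α : ℝ => exp ((1-α)•A) :=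
    cont_exp_smul _ (continuous_const.sub continuous_id) A
  have cint1 : ∀ s : ℝ, IntervalIntegrable
      (fun α : ℝ => exp (α • X s) * (X s - A - (s - t) • B) * exp ((1-α)•A))
      MeasureTheory.volume 0 1 :=
    fun s => (((cont_exp_smul _ continuous_id (X s)).mul continuous_const).mul c3).intervalIntegrable 0 1
  have cint2 : ∀ s : ℝ, IntervalIntegrable
      (fun α : ℝ => (exp (α • X s) - exp (α • A)) * ((s - t) • B) * exp ((1-α)•A))
      MeasureTheory.volume 0 1 :=
    fun s => ((((cont_exp_smul _ continuous_id (X s)).sub (cont_exp_smul _ continuous_id A)).mul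
      continuous_const).mul c3).intervalIntegrable 0 1
  set I₁ : ℝ → 𝔸 := fun s =>
    ∫ α in (0:ℝ)..1, exp (α • X s) * (X s - A - (s - t) • B) * exp ((1-α)•A) with hI₁
  set I₂ : ℝ → 𝔸 := fun s =>
    ∫ α in (0:ℝ)..1, (exp (α • X s) - exp (α • A)) * ((s - t) • B) * exp ((1-α)•A) with hI₂
  have hdecomp : ∀ s : ℝ, exp (X s) - exp A - (s - t) • L = I₁ s + I₂ s := by
    intro s
    have h1 : exp (X s) - exp A
        = ∫ α in (0:ℝ)..1, exp (α • X s) * (X s - A) * exp ((1-α)•A) := duhamel _ _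
    have h2 : (s - t) • L = ∫ α in (0:ℝ)..1, (s-t) • (exp (α • A) * B * exp ((1-α)•A)) := by
      rw [intervalIntegral.integral_smul]
    rw [h1, h2, hI₁, hI₂, ← intervalIntegral.integral_add (cint1 s) (cint2 s),
      ← intervalIntegral.integral_sub]
    · congr 1
      funext α
      simp only [sub_mul, mul_sub, smul_mul_assoc, mul_smul_comm, smul_sub]
      abel
    · exact (((cont_exp_smul _ continuous_id (X s)).mul continuous_const).mul
        c3).intervalIntegrable 0 1
    · exact ((((cont_exp_smul _ continuous_id A).mul continuous_const).mul
        c3).const_smul (s-t)).intervalIntegrable 0 1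
  have h0 : Tendsto (fun s => ‖X s - A‖) (𝓝 t) (𝓝 0) := by
    have hc : ContinuousAt (fun s => ‖X s - A‖) t :=
      (hd.continuousAt.sub (continuousAt_const (y := A))).norm
    unfold ContinuousAt at hc
    simpa [hA] using hc
  have hev : ∀ᶠ s in 𝓝 t, ‖X s - A‖ ≤ 1 := h0.eventually (eventually_le_nhds one_pos)
  have hob1 : I₁ =O[𝓝 t] fun s => X s - A - (s - t) • B := by
    refine IsBigO.of_bound (Real.exp (‖A‖+1) * Real.exp ‖A‖) ?_
    filter_upwards [hev] with s hs
    have hXs : ‖X s‖ ≤ ‖A‖ + 1 := by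
      have := norm_sub_norm_le (X s) A
      linarith
    have hb : ∀ α ∈ Set.uIoc (0:ℝ) 1,
        ‖exp (α • X s) * (X s - A - (s - t) • B) * exp ((1-α)•A)‖
          ≤ Real.exp (‖A‖+1) * ‖X s - A - (s - t) • B‖ * Real.exp ‖A‖ := by
      intro α hα
      rw [Set.uIoc_of_le (by norm_num : (0:ℝ) ≤ 1)] at hα
      refine (norm_mul3_le _ _ _).trans ?_
      obtain ⟨hα1, hα2⟩ := hα
      have e1 : |α| ≤ 1 := by rw [abs_of_pos hα1]; exact hα2
      have e2 : |1 - α| ≤ 1 := by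
        rw [abs_of_nonneg (by linarith : (0:ℝ) ≤ 1 - α)]; linarith
      gcongr
      · exact (norm_exp_smul_le e1 (X s)).trans (Real.exp_le_exp.2 hXs)
      · exact norm_exp_smul_le e2 A
    have := intervalIntegral.norm_integral_le_of_norm_le_const hb
    simp only [sub_zero, abs_one, mul_one] at this
    calc ‖I₁ s‖ ≤ Real.exp (‖A‖+1) * ‖X s - A - (s - t) • B‖ * Real.exp ‖A‖ := this
      _ = Real.exp (‖A‖+1) * Real.exp ‖A‖ * ‖X s - A - (s - t) • B‖ := by ring
  have hlo1 : I₁ =o[𝓝 t] fun s => s - t :=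
    hob1.trans_isLittleO (hasDerivAt_iff_isLittleO.mp hd)
  have hob2 : I₂ =O[𝓝 t] fun s => ‖X s - A‖ * (s - t) := by
    refine IsBigO.of_bound (Real.exp (‖A‖+1) * Real.exp ‖A‖ * ‖B‖ * Real.exp ‖A‖) ?_
    filter_upwards [hev] with s hs
    have hXs : ‖X s‖ ≤ ‖A‖ + 1 := by
      have := norm_sub_norm_le (X s) A
      linarith
    have hb : ∀ α ∈ Set.uIoc (0:ℝ) 1,
        ‖(exp (α • X s) - exp (α • A)) * ((s - t) • B) * exp ((1-α)•A)‖
          ≤ Real.exp (‖A‖+1) * Real.exp ‖A‖ * ‖X s - A‖ * (|s - t| * ‖B‖) * Real.exp ‖A‖ := by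
      intro α hα
      rw [Set.uIoc_of_le (by norm_num : (0:ℝ) ≤ 1)] at hα
      obtain ⟨hαa, hαb⟩ := hα
      have hα1 : |α| ≤ 1 := by rw [abs_of_pos hαa]; exact hαb
      have hα2 : |1 - α| ≤ 1 := by
        rw [abs_of_nonneg (by linarith : (0:ℝ) ≤ 1 - α)]; linarith
      refine (norm_mul3_le _ _ _).trans ?_
      gcongr ?_ * ?_ * ?_
      · refine (norm_exp_sub_exp_le _ _).trans ?_
        have e1 : ‖α • X s‖ ≤ ‖A‖ + 1 := by
          rw [norm_smul, Real.norm_eq_abs]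
          nlinarith [norm_nonneg (X s), abs_nonneg α]
        have e2 : ‖α • A‖ ≤ ‖A‖ := by
          rw [norm_smul, Real.norm_eq_abs]
          nlinarith [norm_nonneg A, abs_nonneg α]
        have e3 : ‖α • X s - α • A‖ ≤ ‖X s - A‖ := by
          rw [← smul_sub, norm_smul, Real.norm_eq_abs]
          nlinarith [norm_nonneg (X s - A), abs_nonneg α]
        calc Real.exp ‖α • X s‖ * ‖α • X s - α • A‖ * Real.exp ‖α • A‖
            ≤ Real.exp (‖A‖+1) * ‖X s - A‖ * Real.exp ‖A‖ := by
              have := Real.exp_le_exp.2 e1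
              have := Real.exp_le_exp.2 e2
              gcongr
          _ = Real.exp (‖A‖+1) * Real.exp ‖A‖ * ‖X s - A‖ := by ring
      · rw [norm_smul, Real.norm_eq_abs]
      · exact norm_exp_smul_le hα2 A
    have := intervalIntegral.norm_integral_le_of_norm_le_const hb
    simp only [sub_zero, abs_one, mul_one] at this
    calc ‖I₂ s‖ ≤ _ := this
      _ = Real.exp (‖A‖+1) * Real.exp ‖A‖ * ‖B‖ * Real.exp ‖A‖ * (‖X s - A‖ * |s - t|) := by
          ring
      _ ≤ Real.exp (‖A‖+1) * Real.exp ‖A‖ * ‖B‖ * Real.exp ‖A‖ * ‖‖X s - A‖ * (s - t)‖ := by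
          gcongr
          rw [Real.norm_eq_abs, abs_mul, abs_norm]
  have hmul : (fun s => ‖X s - A‖ * (s - t)) =o[𝓝 t] fun s => s - t := by
    have h1 : (fun s => ‖X s - A‖) =o[𝓝 t] fun _ => (1:ℝ) := by
      rw [isLittleO_one_iff]
      exact h0
    have h2 : (fun s : ℝ => s - t) =O[𝓝 t] fun s : ℝ => s - t := isBigO_refl _ _
    simpa using h1.mul_isBigO h2
  have hlo2 : I₂ =o[𝓝 t] fun s => s - t := hob2.trans_isLittleO hmul
  exact (hlo1.add hlo2).congr (fun s => (hdecomp s).symm) (fun _ => rfl)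

end GeneralBanach

/-- The entry linear map of a matrix. -/
def entryLM {n : ℕ} (i j : Fin n) : Matrix (Fin n) (Fin n) ℝ →ₗ[ℝ] ℝ :=
  { toFun := fun M => M i j, map_add' := fun _ _ => rfl, map_smul' := fun _ _ => rfl }

section LinftyLemmas

open NormedSpace

attribute [local instance] Matrix.linftyOpNormedRing Matrix.linftyOpNormedAlgebra

variable {n : ℕ}

theorem lin_entryCont (i j : Fin n) : Continuous fun M : Matrix (Fin n) (Fin n) ℝ => M i j :=
  (continuous_apply j).comp (continuous_apply i)

noncomputable def linEntryCLM (i j : Fin n) : Matrix (Fin n) (Fin n) ℝ →L[ℝ] ℝ :=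
  ⟨entryLM i j, lin_entryCont i j⟩

theorem lin_hasDerivAt_coords {f : ℝ → Matrix (Fin n) (Fin n) ℝ}
    {f' : Matrix (Fin n) (Fin n) ℝ} {t : ℝ} (h : HasDerivAt f f' t) (i j : Fin n) :
    HasDerivAt (fun s => f s i j) (f' i j) t :=
  (linEntryCLM i j).hasFDerivAt.comp_hasDerivAt t h

theorem lin_hasDerivAt_of_coords {f : ℝ → Matrix (Fin n) (Fin n) ℝ}
    {f' : Matrix (Fin n) (Fin n) ℝ} {t : ℝ}
    (h : ∀ i j, HasDerivAt (fun s => f s i j) (f' i j) t) : HasDerivAt f f' t := by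
  have h1 : HasDerivAt (fun s => ∑ i : Fin n, ∑ j : Fin n, Matrix.single i j (f s i j))
      (∑ i : Fin n, ∑ j : Fin n, Matrix.single i j (f' i j)) t := by
    refine HasDerivAt.fun_sum fun i _ => HasDerivAt.fun_sum fun j _ => ?_
    have := (h i j).smul_const (Matrix.single i j (1:ℝ))
    simpa [Matrix.smul_single] using this
  have ef : f = fun s => ∑ i : Fin n, ∑ j : Fin n, Matrix.single i j (f s i j) :=
    funext fun s => Matrix.matrix_eq_sum_single (f s)
  have ef' : f' = ∑ i : Fin n, ∑ j : Fin n, Matrix.single i j (f' i j) :=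
    Matrix.matrix_eq_sum_single f'
  rw [ef, ef']
  exact h1

theorem lin_integral_coord {g : ℝ → Matrix (Fin n) (Fin n) ℝ} (hg : Continuous g) (i j : Fin n) :
    (∫ α in (0:ℝ)..1, g α) i j = ∫ α in (0:ℝ)..1, g α i j :=
  ((linEntryCLM i j).intervalIntegral_comp_comm (hg.intervalIntegrable 0 1)).symm

theorem cont_integrand (A B : Matrix (Fin n) (Fin n) ℝ) :
    Continuous fun α : ℝ => exp (α • A) * B * exp ((1 - α) • A) :=
  ((cont_exp_smul _ continuous_id A).mul continuous_const).mul
    (cont_exp_smul _ (continuous_const.sub continuous_id) A)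

theorem key_matrix [Nonempty (Fin n)] (X : ℝ → Matrix (Fin n) (Fin n) ℝ)
    (X' : Matrix (Fin n) (Fin n) ℝ) (t : ℝ) (hd : HasDerivAt X X' t) :
    HasDerivAt (fun s => exp (X s))
      (∫ α in (0:ℝ)..1, exp (α • X t) * X' * exp ((1 - α) • X t)) t := by
  haveI : NormOneClass (Matrix (Fin n) (Fin n) ℝ) :=
    { norm_one := by
        rw [← Matrix.diagonal_one]
        exact (Matrix.linfty_opNorm_diagonal _).trans norm_one }
  exact exp_hasDerivAt_general X X' t hd

end LinftyLemmas

attribute [local instance] Matrix.normedAddCommGroup Matrix.normedSpace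

section SupLemmas

open NormedSpace

variable {n : ℕ}

theorem sup_entryCont (i j : Fin n) : Continuous fun M : Matrix (Fin n) (Fin n) ℝ => M i j :=
  (continuous_apply j).comp (continuous_apply i)

noncomputable def supEntryCLM (i j : Fin n) : Matrix (Fin n) (Fin n) ℝ →L[ℝ] ℝ :=
  ⟨entryLM i j, sup_entryCont i j⟩

theorem sup_hasDerivAt_coords {f : ℝ → Matrix (Fin n) (Fin n) ℝ}
    {f' : Matrix (Fin n) (Fin n) ℝ} {t : ℝ} (h : HasDerivAt f f' t) (i j : Fin n) :
    HasDerivAt (fun s => f s i j) (f' i j) t :=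
  (supEntryCLM i j).hasFDerivAt.comp_hasDerivAt t h

theorem sup_hasDerivAt_of_coords {f : ℝ → Matrix (Fin n) (Fin n) ℝ}
    {f' : Matrix (Fin n) (Fin n) ℝ} {t : ℝ}
    (h : ∀ i j, HasDerivAt (fun s => f s i j) (f' i j) t) : HasDerivAt f f' t := by
  have h1 : HasDerivAt (fun s => ∑ i : Fin n, ∑ j : Fin n, Matrix.single i j (f s i j))
      (∑ i : Fin n, ∑ j : Fin n, Matrix.single i j (f' i j)) t := by
    refine HasDerivAt.fun_sum fun i _ => HasDerivAt.fun_sum fun j _ => ?_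
    have := (h i j).smul_const (Matrix.single i j (1:ℝ))
    simpa [Matrix.smul_single] using this
  have ef : f = fun s => ∑ i : Fin n, ∑ j : Fin n, Matrix.single i j (f s i j) :=
    funext fun s => Matrix.matrix_eq_sum_single (f s)
  have ef' : f' = ∑ i : Fin n, ∑ j : Fin n, Matrix.single i j (f' i j) :=
    Matrix.matrix_eq_sum_single f'
  rw [ef, ef']
  exact h1

theorem sup_integral_coord {g : ℝ → Matrix (Fin n) (Fin n) ℝ} (hg : Continuous g) (i j : Fin n) :
    (∫ α in (0:ℝ)..1, g α) i j = ∫ α in (0:ℝ)..1, g α i j :=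
  ((supEntryCLM i j).intervalIntegral_comp_comm (hg.intervalIntegrable 0 1)).symm

end SupLemmas



/-- derivative of the matrix exponential along a curve of symmetric
matrices. -/
theorem stmt_10 {n : ℕ} (X : ℝ → Matrix (Fin n) (Fin n) ℝ)
    (X' : Matrix (Fin n) (Fin n) ℝ) (t : ℝ)
    (hsym : ∀ s, (X s).IsHermitian) (hd : HasDerivAt X X' t) :
    HasDerivAt (fun s => NormedSpace.exp (X s))
      (∫ α in (0:ℝ)..1,
        NormedSpace.exp (α • X t) * X' * NormedSpace.exp ((1 - α) • X t)) t := by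
  rcases Nat.eq_zero_or_pos n with hn | hn
  · subst hn
    haveI : Subsingleton (Matrix (Fin 0) (Fin 0) ℝ) := ⟨fun a b => funext fun i => i.elim0⟩
    have h1 : (fun s => NormedSpace.exp (X s)) = fun _ => NormedSpace.exp (X t) :=
      funext fun s => Subsingleton.elim _ _
    rw [h1, Subsingleton.elim (∫ α in (0:ℝ)..1,
      NormedSpace.exp (α • X t) * X' * NormedSpace.exp ((1 - α) • X t))
      (0 : Matrix (Fin 0) (Fin 0) ℝ)]
    exact hasDerivAt_const t _
  · haveI : Nonempty (Fin n) := Fin.pos_iff_nonempty.mp hn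
    have hdl := lin_hasDerivAt_of_coords (fun i j => sup_hasDerivAt_coords hd i j)
    have hkey := key_matrix X X' t hdl
    have hcoords := fun i j => lin_hasDerivAt_coords hkey i j
    have hcont := cont_integrand (X t) X'
    refine sup_hasDerivAt_of_coords (fun i j => ?_)
    rw [sup_integral_coord hcont i j]
    have h2 := hcoords i j
    rwa [lin_integral_coord hcont i j] at h2
end

section
/- Let 0 < ε < 1/2, δ > 0, and w ∈ Δ_{N,2ε}. Set S₋ = {i : w_i > 0} and S₊ = {i : w_i < 1/((1−2ε)N)}. If w is a δ-stationary point of the softmax objective f on Δ_{N,2ε}, then ∇f(w)_i ≤ ∇f(w)_j + √2·δ for all i ∈ S₋ and j ∈ S₊. -/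
open Matrix Finset RealInnerProductSpace

/-- bimodal sub-gradient property at `δ`-stationary points of the
softmax objective. -/
theorem stmt_12 {d N : ℕ} (X : Matrix (Fin d) (Fin N) ℝ) (ε δ : ℝ)
    (hε0 : 0 < ε) (hε1 : ε < 1 / 2) (hδ : 0 < δ)
    (w : Fin N → ℝ) (hw : w ∈ deltaSet N (2 * ε))
    (hstat : ∀ u : Fin N → ℝ, vnorm u = 1 →
      (∃ α : ℝ, 0 < α ∧ w + α • u ∈ deltaSet N (2 * ε)) →
      -δ ≤ u ⬝ᵥ gradSmax X (Real.log d / ε) w) :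
    ∀ i j : Fin N, 0 < w i → w j < 1 / ((1 - 2 * ε) * N) →
      gradSmax X (Real.log d / ε) w i ≤ gradSmax X (Real.log d / ε) w j + Real.sqrt 2 * δ := by
  intro i j hi hj
  by_cases hij : i = j
  · subst hij
    have h2 : 0 ≤ Real.sqrt 2 * δ := by positivity
    linarith
  have hs2 : (0:ℝ) < Real.sqrt 2 := by positivity
  set c : ℝ := (Real.sqrt 2)⁻¹ with hc
  have hc0 : 0 < c := by positivity
  have hsc : Real.sqrt 2 * c = 1 := mul_inv_cancel₀ (ne_of_gt hs2)
  have hcsq : c ^ 2 = 2⁻¹ := by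
    rw [hc, inv_pow, Real.sq_sqrt (by norm_num : (0:ℝ) ≤ 2)]
  set u : Fin N → ℝ := fun k => if k = j then c else if k = i then -c else 0 with hu
  have hji : j ≠ i := Ne.symm hij
  have hnormu : vnorm u = 1 := by
    have hsum : ∑ k, u k ^ 2 = 1 := by
      have hpt : ∀ k, u k ^ 2 = (if k = j then (2:ℝ)⁻¹ else 0) + (if k = i then (2:ℝ)⁻¹ else 0) := by
        intro k
        by_cases h1 : k = j
        · subst h1; simp [hu, hji, hcsq]
        · by_cases h2 : k = i
          · subst h2; simp [hu, h1, hcsq]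
          · simp [hu, h1, h2]
      simp only [hpt, Finset.sum_add_distrib, Finset.sum_ite_eq' Finset.univ,
          Finset.mem_univ, if_true]
      norm_num
    unfold vnorm
    rw [hsum, Real.sqrt_one]
  -- the constraint set facts
  obtain ⟨hwsum, hwb⟩ := hw
  have hN : (0:ℝ) < N := by
    have : (0:ℕ) < N := i.pos
    exact_mod_cast this
  have h1e : (0:ℝ) < 1 - 2 * ε := by linarith
  set cap : ℝ := 1 / ((1 - 2 * ε) * N) with hcap
  have hcap0 : 0 < cap := by
    apply div_pos one_pos
    positivity
  set α : ℝ := min (Real.sqrt 2 * w i) (Real.sqrt 2 * (cap - w j)) with hα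
  have hα0 : 0 < α := by
    apply lt_min
    · positivity
    · have : 0 < cap - w j := by linarith
      positivity
  have hαc1 : α * c ≤ w i := by
    have h1 : α ≤ Real.sqrt 2 * w i := min_le_left _ _
    have := mul_le_mul_of_nonneg_right h1 (le_of_lt hc0)
    calc α * c ≤ Real.sqrt 2 * w i * c := this
      _ = w i := by rw [mul_comm (Real.sqrt 2) (w i), mul_assoc, hsc, mul_one]
  have hαc2 : α * c ≤ cap - w j := by
    have h1 : α ≤ Real.sqrt 2 * (cap - w j) := min_le_right _ _
    have := mul_le_mul_of_nonneg_right h1 (le_of_lt hc0)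
    calc α * c ≤ Real.sqrt 2 * (cap - w j) * c := this
      _ = cap - w j := by rw [mul_comm (Real.sqrt 2) _, mul_assoc, hsc, mul_one]
  have hmem : w + α • u ∈ deltaSet N (2 * ε) := by
    constructor
    · have husum : ∑ k, u k = 0 := by
        have hpt : ∀ k, u k = (if k = j then c else 0) + (if k = i then -c else 0) := by
          intro k
          by_cases h1 : k = j
          · subst h1; simp [hu, hji]
          · by_cases h2 : k = i
            · subst h2; simp [hu, h1]
            · simp [hu, h1, h2]
        simp only [hpt, Finset.sum_add_distrib, Finset.sum_ite_eq' Finset.univ,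
            Finset.mem_univ, if_true]
        ring
      simp only [Pi.add_apply, Pi.smul_apply, smul_eq_mul, Finset.sum_add_distrib,
        ← Finset.mul_sum, husum, hwsum]
      ring
    · intro k
      have hk := hwb k
      rw [show (1 / ((1 - 2 * ε) * (N:ℝ))) = cap from hcap.symm]
      by_cases h1 : k = j
      · subst h1
        have huk : u k = c := by simp [hu]
        simp only [Pi.add_apply, Pi.smul_apply, smul_eq_mul, huk]
        constructor
        · nlinarith [hk.1]
        · nlinarith
      · by_cases h2 : k = i
        · subst h2
          have huk : u k = -c := by simp [hu, h1]
          simp only [Pi.add_apply, Pi.smul_apply, smul_eq_mul, huk]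
          constructor
          · nlinarith
          · nlinarith [hk.2]
        · have huk : u k = 0 := by simp [hu, h1, h2]
          simp only [Pi.add_apply, Pi.smul_apply, smul_eq_mul, huk, mul_zero, add_zero]
          exact hk
  have hdot := hstat u hnormu ⟨α, hα0, hmem⟩
  set g := gradSmax X (Real.log d / ε) w with hg
  have hdval : u ⬝ᵥ g = c * g j - c * g i := by
    unfold dotProduct
    have hpt : ∀ k, u k * g k = (if k = j then c * g j else 0) + (if k = i then -(c * g i) else 0) := by
      intro k
      by_cases h1 : k = j
      · subst h1; simp [hu, hji]
      · by_cases h2 : k = i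
        · subst h2
          simp only [hu, if_neg h1, if_pos rfl, if_neg hji]
          ring_nf
          simp
        · simp [hu, h1, h2]
    simp only [hpt, Finset.sum_add_distrib, Finset.sum_ite_eq' Finset.univ,
        Finset.mem_univ, if_true]
    ring
  rw [hdval] at hdot
  nlinarith [hdot, hsc, hs2, hδ]
end

section
/- Let K ⊆ ℝ^n be a nonempty closed convex set, δ > 0, B ≥ 0, β > 0, and let f : ℝ^n → ℝ be differentiable with ‖∇f(x) − ∇f(y)‖₂ ≤ β‖x − y‖₂ for all x, y ∈ K and 0 ≤ f(x) ≤ B for all x ∈ K. Starting from any x₀ ∈ K, define x_{τ+1} = P_K(x_τ − (1/β)·∇f(x_τ)), where P_K is the Euclidean projection onto K. If T is a positive integer with T ≥ 8βB/δ², then there exists 0 ≤ τ < T such that x_{τ+1} is a δ-stationary point of f on K. -/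
open Matrix Finset RealInnerProductSpace

set_option maxHeartbeats 1000000

section Aux

open InnerProductSpace

variable {n : ℕ}

lemma proj_vi {K : Set (EuclideanSpace ℝ (Fin n))} (hKconv : Convex ℝ K)
    (proj : EuclideanSpace ℝ (Fin n) → EuclideanSpace ℝ (Fin n))
    (hproj : ∀ y, proj y ∈ K ∧ ∀ z ∈ K, ‖proj y - y‖ ≤ ‖z - y‖)
    (y : EuclideanSpace ℝ (Fin n)) : ∀ z ∈ K, ⟪y - proj y, z - proj y⟫ ≤ 0 := by
  intro z hz
  set p := proj y with hp
  have hm := (hproj y).1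
  have key : ∀ t : ℝ, 0 < t → t ≤ 1 →
      0 ≤ 2 * ⟪p - y, z - p⟫ + t * ‖z - p‖ ^ 2 := by
    intro t ht0 ht1
    have hzt : p + t • (z - p) ∈ K := by
      have := hKconv hm hz (by linarith : (0:ℝ) ≤ 1 - t) (le_of_lt ht0) (by ring)
      convert this using 1
      module
    have hle := (hproj y).2 _ hzt
    rw [← hp] at hle
    have hle2 : ‖p - y‖ ^ 2 ≤ ‖p + t • (z - p) - y‖ ^ 2 := by
      have := mul_self_le_mul_self (norm_nonneg _) hle
      simpa [sq] using this
    have hexp : ‖p + t • (z - p) - y‖ ^ 2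
        = ‖p - y‖ ^ 2 + 2 * (t * ⟪p - y, z - p⟫) + t ^ 2 * ‖z - p‖ ^ 2 := by
      have e : p + t • (z - p) - y = (p - y) + t • (z - p) := by abel
      rw [e, norm_add_sq_real, real_inner_smul_right, norm_smul, Real.norm_eq_abs,
        abs_of_pos ht0, mul_pow]
    rw [hexp] at hle2
    nlinarith
  have hfin : 0 ≤ 2 * ⟪p - y, z - p⟫ := by
    by_contra hcon
    push_neg at hcon
    set c := 2 * ⟪p - y, z - p⟫ with hcdef
    set d := ‖z - p‖ ^ 2 with hddef
    have hd0 : 0 ≤ d := by positivity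
    rcases eq_or_lt_of_le hd0 with hd | hd
    · have := key 1 one_pos le_rfl
      rw [← hd] at this
      linarith
    · have htpos : 0 < min 1 (-c / (2 * d)) := by
        exact lt_min one_pos (div_pos (by linarith) (by linarith))
      have htle : min 1 (-c / (2 * d)) ≤ 1 := min_le_left _ _
      have := key _ htpos htle
      have h2 : min 1 (-c / (2 * d)) * d ≤ (-c / (2 * d)) * d :=
        mul_le_mul_of_nonneg_right (min_le_right _ _) hd0
      have h3 : (-c / (2 * d)) * d = -c / 2 := by field_simp
      linarith
  have : ⟪y - p, z - p⟫ = -⟪p - y, z - p⟫ := by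
    rw [← inner_neg_left]; congr 1; abel
  rw [this]
  linarith

/-- Descent lemma for a `β`-smooth function on a convex set. -/
lemma descent_lemma {K : Set (EuclideanSpace ℝ (Fin n))} (hKconv : Convex ℝ K)
    {β : ℝ} (hβ : 0 < β)
    {f : EuclideanSpace ℝ (Fin n) → ℝ} {g : EuclideanSpace ℝ (Fin n) → EuclideanSpace ℝ (Fin n)}
    (hdiff : ∀ x, HasGradientAt f (g x) x)
    (hsmooth : ∀ x ∈ K, ∀ y ∈ K, ‖g x - g y‖ ≤ β * ‖x - y‖)
    {a b : EuclideanSpace ℝ (Fin n)} (ha : a ∈ K) (hb : b ∈ K) :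
    f b ≤ f a + ⟪g a, b - a⟫ + β / 2 * ‖b - a‖ ^ 2 := by
  set h : EuclideanSpace ℝ (Fin n) := b - a with hh
  have hline : ∀ t : ℝ, HasDerivAt (fun t : ℝ => a + t • h) h t := by
    intro t
    simpa using ((hasDerivAt_id t).smul_const h).const_add a
  have hmem : ∀ t ∈ Set.Icc (0 : ℝ) 1, a + t • h ∈ K := by
    intro t ht
    have := hKconv ha hb (by linarith [ht.2] : (0:ℝ) ≤ 1 - t) ht.1 (by ring)
    convert this using 1
    rw [hh]
    module
  set c : ℝ := ⟪g a, h⟫ with hc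
  set q : ℝ := β / 2 * ‖h‖ ^ 2 with hq
  set ψ : ℝ → ℝ := fun t => f (a + t • h) - f a - t * c - q * t ^ 2 with hψ
  have hψ' : ∀ t, HasDerivAt ψ (⟪g (a + t • h), h⟫ - c - 2 * q * t) t := by
    intro t
    have h1 : HasDerivAt (fun t : ℝ => f (a + t • h)) ⟪g (a + t • h), h⟫ t := by
      have := ((hdiff (a + t • h)).hasFDerivAt).comp_hasDerivAt t (hline t)
      simpa [InnerProductSpace.toDual_apply_apply, Function.comp_def] using this
    have h2 : HasDerivAt (fun t : ℝ => t * c) c t := by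
      simpa using (hasDerivAt_id t).mul_const c
    have h3 : HasDerivAt (fun t : ℝ => q * t ^ 2) (2 * q * t) t := by
      have := (hasDerivAt_pow 2 t).const_mul q
      simpa [mul_comm, mul_assoc, mul_left_comm] using this
    exact ((h1.sub_const (f a)).sub h2).sub h3
  have hanti : AntitoneOn ψ (Set.Icc (0 : ℝ) 1) := by
    apply antitoneOn_of_deriv_nonpos (convex_Icc 0 1)
    · exact fun t _ => ((hψ' t).differentiableAt).continuousAt.continuousWithinAt
    · intro t _
      exact ((hψ' t).differentiableAt).differentiableWithinAt
    · intro t ht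
      rw [interior_Icc] at ht
      rw [(hψ' t).deriv]
      have hb1 : ⟪g (a + t • h) - g a, h⟫ ≤ β * t * ‖h‖ ^ 2 := by
        calc ⟪g (a + t • h) - g a, h⟫ ≤ ‖g (a + t • h) - g a‖ * ‖h‖ :=
              real_inner_le_norm _ _
          _ ≤ (β * ‖(a + t • h) - a‖) * ‖h‖ := by
              have := hsmooth _ (hmem t ⟨le_of_lt ht.1, le_of_lt ht.2⟩) a ha
              exact mul_le_mul_of_nonneg_right this (norm_nonneg _)
          _ = β * t * ‖h‖ ^ 2 := by
              have : (a + t • h) - a = t • h := by abel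
              rw [this, norm_smul, Real.norm_eq_abs, abs_of_pos ht.1]
              ring
      have hinner : ⟪g (a + t • h), h⟫ - c = ⟪g (a + t • h) - g a, h⟫ := by
        rw [hc, inner_sub_left]
      have : 2 * q * t = β * t * ‖h‖ ^ 2 := by rw [hq]; ring
      linarith [hinner ▸ hb1]
  have h10 : ψ 1 ≤ ψ 0 :=
    hanti (Set.mem_Icc.2 ⟨le_refl 0, zero_le_one⟩) (Set.mem_Icc.2 ⟨zero_le_one, le_refl 1⟩)
      zero_le_one
  have hψ0 : ψ 0 = 0 := by simp [hψ]
  have hψ1 : ψ 1 = f b - f a - c - q := by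
    simp only [hψ]
    rw [show a + (1 : ℝ) • h = b by rw [hh]; module]
    ring
  rw [hψ0, hψ1] at h10
  linarith

end Aux

/-- projected gradient descent finds a `δ`-stationary point in
`O(βB/δ²)` iterations. -/
theorem stmt_15 {n : ℕ} (K : Set (EuclideanSpace ℝ (Fin n)))
    (hKne : K.Nonempty) (hKcl : IsClosed K) (hKconv : Convex ℝ K)
    (δ B β : ℝ) (hδ : 0 < δ) (hB : 0 ≤ B) (hβ : 0 < β)
    (f : EuclideanSpace ℝ (Fin n) → ℝ) (g : EuclideanSpace ℝ (Fin n) → EuclideanSpace ℝ (Fin n))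
    (hdiff : ∀ x, HasGradientAt f (g x) x)
    (hsmooth : ∀ x ∈ K, ∀ y ∈ K, ‖g x - g y‖ ≤ β * ‖x - y‖)
    (hrange : ∀ x ∈ K, 0 ≤ f x ∧ f x ≤ B)
    (proj : EuclideanSpace ℝ (Fin n) → EuclideanSpace ℝ (Fin n))
    (hproj : ∀ y, proj y ∈ K ∧ ∀ z ∈ K, ‖proj y - y‖ ≤ ‖z - y‖)
    (x : ℕ → EuclideanSpace ℝ (Fin n)) (hx0 : x 0 ∈ K)
    (hiter : ∀ τ, x (τ + 1) = proj (x τ - (1 / β) • g (x τ)))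
    (T : ℕ) (hT : 0 < T) (hTbig : 8 * β * B / δ ^ 2 ≤ (T : ℝ)) :
    ∃ τ < T, x (τ + 1) ∈ K ∧
      ∀ u : EuclideanSpace ℝ (Fin n), ‖u‖ = 1 →
        (∃ α : ℝ, 0 < α ∧ x (τ + 1) + α • u ∈ K) → -δ ≤ ⟪u, g (x (τ + 1))⟫ := by
  -- all iterates lie in K
  have hxK : ∀ τ, x τ ∈ K := by
    intro τ
    induction τ with
    | zero => exact hx0
    | succ τ _ => rw [hiter τ]; exact (hproj _).1
  have hVI := proj_vi hKconv proj hproj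
  -- key one-step decrease
  have hkey : ∀ τ : ℕ, β / 2 * ‖x τ - x (τ + 1)‖ ^ 2 ≤ f (x τ) - f (x (τ + 1)) := by
    intro τ
    set Δ : EuclideanSpace ℝ (Fin n) := x τ - x (τ + 1) with hΔ
    have hvi := hVI (x τ - (1 / β) • g (x τ)) (x τ) (hxK τ)
    rw [← hiter τ] at hvi
    have hvi' : ⟪Δ - (1 / β) • g (x τ), Δ⟫ ≤ 0 := by
      have : x τ - (1 / β) • g (x τ) - x (τ + 1) = Δ - (1 / β) • g (x τ) := by
        rw [hΔ]; abel
      rwa [this, ← hΔ] at hvi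
    have hginner : β * ‖Δ‖ ^ 2 ≤ ⟪g (x τ), Δ⟫ := by
      have hexp : ⟪Δ - (1 / β) • g (x τ), Δ⟫
          = ‖Δ‖ ^ 2 - (1 / β) * ⟪g (x τ), Δ⟫ := by
        rw [inner_sub_left, real_inner_smul_left, real_inner_self_eq_norm_sq]
      rw [hexp] at hvi'
      have h3 : β * (1 / β * ⟪g (x τ), Δ⟫) = ⟪g (x τ), Δ⟫ := by field_simp
      nlinarith [mul_le_mul_of_nonneg_left hvi' hβ.le]
    have hdesc := descent_lemma hKconv hβ hdiff hsmooth (hxK τ) (hxK (τ + 1))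
    have hba : x (τ + 1) - x τ = -Δ := by rw [hΔ]; abel
    rw [hba] at hdesc
    have hnΔ : ‖(-Δ : EuclideanSpace ℝ (Fin n))‖ = ‖Δ‖ := norm_neg _
    rw [inner_neg_right, hnΔ] at hdesc
    linarith
  -- find a good step
  have hsum : ∑ τ ∈ Finset.range T, (β / 2 * ‖x τ - x (τ + 1)‖ ^ 2) ≤ B := by
    calc ∑ τ ∈ Finset.range T, (β / 2 * ‖x τ - x (τ + 1)‖ ^ 2)
        ≤ ∑ τ ∈ Finset.range T, (f (x τ) - f (x (τ + 1))) :=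
          Finset.sum_le_sum fun τ _ => hkey τ
      _ = f (x 0) - f (x T) := Finset.sum_range_sub' (fun τ => f (x τ)) T
      _ ≤ B := by
          have h0 := (hrange (x 0) (hxK 0)).2
          have hT' := (hrange (x T) (hxK T)).1
          linarith
  have hgood : ∃ τ ∈ Finset.range T, β / 2 * ‖x τ - x (τ + 1)‖ ^ 2 ≤ B / T := by
    by_contra hcon
    push_neg at hcon
    have : (T : ℝ) * (B / T) < ∑ τ ∈ Finset.range T, (β / 2 * ‖x τ - x (τ + 1)‖ ^ 2) := by
      have := Finset.sum_lt_sum_of_nonempty (Finset.nonempty_range_iff.2 hT.ne')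
        (fun τ hτ => hcon τ hτ)
      simpa [Finset.sum_const, Finset.card_range, nsmul_eq_mul] using this
    have hTpos : (0:ℝ) < T := Nat.cast_pos.2 hT
    rw [mul_div_cancel₀ _ hTpos.ne'] at this
    linarith
  obtain ⟨τ, hτT, hτ⟩ := hgood
  rw [Finset.mem_range] at hτT
  refine ⟨τ, hτT, by rw [hiter τ]; exact (hproj _).1, ?_⟩
  -- norm bound on the step
  set Δ : EuclideanSpace ℝ (Fin n) := x τ - x (τ + 1) with hΔ
  have hTpos : (0:ℝ) < T := Nat.cast_pos.2 hT
  have hBT : B / (T : ℝ) ≤ δ ^ 2 / (8 * β) := by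
    rw [div_le_div_iff₀ hTpos (by positivity)]
    have h8 : 8 * β * B ≤ (T : ℝ) * δ ^ 2 := by
      have := (div_le_iff₀ (by positivity : (0:ℝ) < δ ^ 2)).1 hTbig
      linarith
    linarith
  have hΔsq : ‖Δ‖ ^ 2 ≤ (δ / (2 * β)) ^ 2 := by
    have h1 : β / 2 * ‖Δ‖ ^ 2 ≤ δ ^ 2 / (8 * β) := le_trans hτ hBT
    have h2 : β / 2 * ‖Δ‖ ^ 2 * (8 * β) ≤ δ ^ 2 := by
      rw [← le_div_iff₀ (by positivity : (0:ℝ) < 8 * β)]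
      exact h1
    rw [div_pow, le_div_iff₀ (by positivity : (0:ℝ) < (2 * β) ^ 2)]
    nlinarith
  have hΔle : ‖Δ‖ ≤ δ / (2 * β) := by
    have h := Real.sqrt_le_sqrt hΔsq
    rwa [Real.sqrt_sq (norm_nonneg _), Real.sqrt_sq (by positivity)] at h
  rintro u hu ⟨α, hα, hz⟩
  -- variational inequality at z
  have hvi := hVI (x τ - (1 / β) • g (x τ)) (x (τ + 1) + α • u) hz
  rw [← hiter τ] at hvi
  have hvi' : ⟪Δ - (1 / β) • g (x τ), α • u⟫ ≤ 0 := by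
    have e1 : x τ - (1 / β) • g (x τ) - x (τ + 1) = Δ - (1 / β) • g (x τ) := by
      rw [hΔ]; abel
    have e2 : x (τ + 1) + α • u - x (τ + 1) = α • u := by abel
    rwa [e1, e2] at hvi
  rw [real_inner_smul_right, inner_sub_left, real_inner_smul_left] at hvi'
  have hvi'' : ⟪Δ, u⟫ - (1 / β) * ⟪g (x τ), u⟫ ≤ 0 := by
    rcases mul_nonpos_iff.1 hvi' with ⟨h1, h2⟩ | ⟨h1, h2⟩
    · linarith
    · linarith
  have hCS : -(‖Δ‖) ≤ ⟪Δ, u⟫ := by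
    have := real_inner_le_norm (-Δ) u
    rw [inner_neg_left, norm_neg, hu, mul_one] at this
    linarith
  have hg1 : -(β * ‖Δ‖) ≤ ⟪g (x τ), u⟫ := by
    have h3 : β * (1 / β * ⟪g (x τ), u⟫) = ⟪g (x τ), u⟫ := by field_simp
    nlinarith [mul_le_mul_of_nonneg_left hvi'' hβ.le]
  -- smoothness transfer to x (τ+1)
  have hsm := hsmooth (x (τ + 1)) (hxK (τ + 1)) (x τ) (hxK τ)
  have hnrev : ‖x (τ + 1) - x τ‖ = ‖Δ‖ := by rw [hΔ, norm_sub_rev]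
  rw [hnrev] at hsm
  have hdiffinner : -(β * ‖Δ‖) ≤ ⟪g (x (τ + 1)) - g (x τ), u⟫ := by
    have := real_inner_le_norm (-(g (x (τ + 1)) - g (x τ))) u
    rw [inner_neg_left, norm_neg, hu, mul_one] at this
    nlinarith
  have hfin : -(2 * (β * ‖Δ‖)) ≤ ⟪g (x (τ + 1)), u⟫ := by
    rw [inner_sub_left] at hdiffinner
    linarith
  rw [real_inner_comm]
  have hhalf : β * ‖Δ‖ ≤ δ / 2 := by
    calc β * ‖Δ‖ ≤ β * (δ / (2 * β)) := mul_le_mul_of_nonneg_left hΔle (le_of_lt hβ)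
      _ = δ / 2 := by
        rw [eq_div_iff (two_ne_zero : (2:ℝ) ≠ 0)]
        field_simp
  linarith
end
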